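/- arXiv:cs/0501039 — 3 statements merged into one kernel-verified Lean document; each statement's English description precedes it below -/
import Mathlib

section
/- If a paraproof structure satisfies the weak parsing criterion (some parsing reduction sequence reaches the trivial single-class structure on its conclusions), then it is sequentializable. -/
/-! Multiplicative linear logic formulas -/

inductive MLLForm : Type
  | atomP : ℕ → MLLForm
  | atomN : ℕ → MLLForm
  | tens : MLLForm → MLLForm → MLLForm
  | parr : MLLForm → MLLForm → MLLForm
  deriving DecidableEq, Inhabited

namespace MLLForm

def dual : MLLForm → MLLForm
  | atomP n => atomN n
  | atomN n => atomP n
  | tens a b => parr a.dual b.dual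
  | parr a b => tens a.dual b.dual

/-- Subformula at an occurrence (word over {left=false, right=true}). -/
def subAt : MLLForm → List Bool → Option MLLForm
  | A, [] => some A
  | tens a _, false :: u => a.subAt u
  | tens _ b, true :: u => b.subAt u
  | parr a _, false :: u => a.subAt u
  | parr _ b, true :: u => b.subAt u
  | _, _ => none

end MLLForm

/-- A (raw) paraproof structure: a finite multiset of conclusions, given by names,
with for each name a formula and a set of occurrences (the partial formula tree),
together with a partition of the leaves (generalized axioms / daimons). -/
structure PPS where
  names : Finset ℕ
  form : ℕ → MLLForm
  occs : ℕ → Finset (List Bool)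
  part : Finset (Finset (ℕ × List Bool))

namespace PPS

def leaves (S : PPS) : Finset (ℕ × List Bool) :=
  S.names.biUnion fun n => (S.occs n).image fun u => (n, u)

/-- Well-formedness: occurrences are defined and pairwise non-prefix; the partition
really is a partition of the set of leaves. -/
def WF (S : PPS) : Prop :=
  (∀ n ∈ S.names, ∀ u ∈ S.occs n, ((S.form n).subAt u).isSome) ∧
  (∀ n ∈ S.names, ∀ u ∈ S.occs n, ∀ v ∈ S.occs n, u ≠ v → ¬ u <+: v) ∧
  (∀ c ∈ S.part, c.Nonempty) ∧
  (∀ c ∈ S.part, ∀ d ∈ S.part, c ≠ d → Disjoint c d) ∧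
  S.part.biUnion id = S.leaves

/-- `(n, u)` is a node of the forest underlying `S`. -/
def isNode (S : PPS) (n : ℕ) (u : List Bool) : Prop :=
  n ∈ S.names ∧ ∃ v ∈ S.occs n, u <+: v

/-- `(n, u)` is an internal par node of `S`. -/
def isPar (S : PPS) (n : ℕ) (u : List Bool) : Prop :=
  n ∈ S.names ∧ (∃ v ∈ S.occs n, u <+: v ∧ u ≠ v) ∧
    ∃ a b, (S.form n).subAt u = some (.parr a b)

end PPS

/-- Relabelling of a leaf used when two conclusions get merged under a connective. -/
def relab1 (m0 n : ℕ) (b : Bool) : ℕ × List Bool → ℕ × List Bool :=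
  fun x => if x.1 = m0 then (n, b :: x.2) else x

/-- Sequentializable paraproof structures (paraproof nets) for cut-free MLL:
generalized axiom, par rule, tensor rule. -/
inductive SeqNet : PPS → Prop
  | ax (S : PPS)
      (h1 : ∀ n ∈ S.names, S.occs n = {([] : List Bool)})
      (h2 : S.part = {S.leaves}) : SeqNet S
  | parr (S S' : PPS) (nB nC n : ℕ)
      (hSeq : SeqNet S)
      (hnB : nB ∈ S.names) (hnC : nC ∈ S.names) (hne : nB ≠ nC)
      (hfresh : n ∉ S.names \ {nB, nC})
      (hnames : S'.names = insert n (S.names \ {nB, nC}))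
      (hform : S'.form n = .parr (S.form nB) (S.form nC))
      (hformo : ∀ m ∈ S.names \ {nB, nC}, S'.form m = S.form m)
      (hoccs : S'.occs n =
        (S.occs nB).image (fun u => false :: u) ∪ (S.occs nC).image (fun u => true :: u))
      (hoccso : ∀ m ∈ S.names \ {nB, nC}, S'.occs m = S.occs m)
      (hpart : S'.part = S.part.image
        (Finset.image (fun x => relab1 nB n false (relab1 nC n true x)))) :
      SeqNet S'
  | tens (S1 S2 S' : PPS) (nB nC n : ℕ)
      (hSeq1 : SeqNet S1) (hSeq2 : SeqNet S2)
      (hdisj : Disjoint S1.names S2.names)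
      (hnB : nB ∈ S1.names) (hnC : nC ∈ S2.names)
      (hfresh : n ∉ (S1.names ∪ S2.names) \ {nB, nC})
      (hnames : S'.names = insert n ((S1.names.erase nB) ∪ (S2.names.erase nC)))
      (hform : S'.form n = .tens (S1.form nB) (S2.form nC))
      (hform1 : ∀ m ∈ S1.names.erase nB, S'.form m = S1.form m)
      (hform2 : ∀ m ∈ S2.names.erase nC, S'.form m = S2.form m)
      (hoccs : S'.occs n =
        (S1.occs nB).image (fun u => false :: u) ∪ (S2.occs nC).image (fun u => true :: u))
      (hoccs1 : ∀ m ∈ S1.names.erase nB, S'.occs m = S1.occs m)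
      (hoccs2 : ∀ m ∈ S2.names.erase nC, S'.occs m = S2.occs m)
      (hpart : S'.part =
        S1.part.image (Finset.image (relab1 nB n false)) ∪
        S2.part.image (Finset.image (relab1 nC n true))) :
      SeqNet S'

/-- Vertices of correction graphs: nodes of the forest, or classes of the partition. -/
abbrev PNode := (ℕ × List Bool) ⊕ Finset (ℕ × List Bool)

/-- Edges of the correction graph induced by a switching `sw` (value `true` = L,
which cuts the edge to the right subformula, i.e. to child `true`). -/
def corrRel (S : PPS) (sw : ℕ × List Bool → Bool) : PNode → PNode → Prop :=
  fun x y =>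
    (∃ n u b, x = Sum.inl (n, u) ∧ y = Sum.inl (n, u ++ [b]) ∧
      S.isNode n (u ++ [b]) ∧ ¬ (S.isPar n u ∧ sw (n, u) = b)) ∨
    (∃ n u c, x = Sum.inl (n, u) ∧ y = Sum.inr c ∧ c ∈ S.part ∧ (n, u) ∈ c)

def corrGraph (S : PPS) (sw : ℕ × List Bool → Bool) : SimpleGraph PNode :=
  SimpleGraph.fromRel (corrRel S sw)

def PPS.nodeSet (S : PPS) : Set PNode :=
  {x | (∃ n u, x = Sum.inl (n, u) ∧ S.isNode n u) ∨ ∃ c ∈ S.part, x = Sum.inr c}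

/-- The Danos-Regnier criterion: every correction graph is a tree
(connected and acyclic). -/
def DR (S : PPS) : Prop :=
  ∀ sw, ((corrGraph S sw).induce S.nodeSet).Connected ∧ (corrGraph S sw).IsAcyclic

/-- The Acyclicity criterion (MIX): every correction graph is acyclic. -/
def AC (S : PPS) : Prop := ∀ sw, (corrGraph S sw).IsAcyclic

/-- The parsing rewriting system on paraproof structures. -/
inductive Parse : PPS → PPS → Prop
  | parr (S S' : PPS) (n : ℕ) (u : List Bool) (a b : MLLForm)
      (c : Finset (ℕ × List Bool))
      (hn : n ∈ S.names)
      (hf : (S.form n).subAt u = some (.parr a b))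
      (h0 : u ++ [false] ∈ S.occs n) (h1 : u ++ [true] ∈ S.occs n)
      (hc : c ∈ S.part) (hc0 : (n, u ++ [false]) ∈ c) (hc1 : (n, u ++ [true]) ∈ c)
      (hnames : S'.names = S.names)
      (hforms : ∀ m ∈ S.names, S'.form m = S.form m)
      (hoccs : S'.occs n =
        insert u (((S.occs n).erase (u ++ [false])).erase (u ++ [true])))
      (hoccso : ∀ m ∈ S.names, m ≠ n → S'.occs m = S.occs m)
      (hpart : S'.part =
        insert (insert (n, u) ((c.erase (n, u ++ [false])).erase (n, u ++ [true])))
          (S.part.erase c)) :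
      Parse S S'
  | tens (S S' : PPS) (n : ℕ) (u : List Bool) (a b : MLLForm)
      (c1 c2 : Finset (ℕ × List Bool))
      (hn : n ∈ S.names)
      (hf : (S.form n).subAt u = some (.tens a b))
      (h0 : u ++ [false] ∈ S.occs n) (h1 : u ++ [true] ∈ S.occs n)
      (hc1 : c1 ∈ S.part) (hc2 : c2 ∈ S.part) (hne : c1 ≠ c2)
      (hm0 : (n, u ++ [false]) ∈ c1) (hm1 : (n, u ++ [true]) ∈ c2)
      (hnames : S'.names = S.names)
      (hforms : ∀ m ∈ S.names, S'.form m = S.form m)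
      (hoccs : S'.occs n =
        insert u (((S.occs n).erase (u ++ [false])).erase (u ++ [true])))
      (hoccso : ∀ m ∈ S.names, m ≠ n → S'.occs m = S.occs m)
      (hpart : S'.part =
        insert (insert (n, u) (((c1 ∪ c2).erase (n, u ++ [false])).erase (n, u ++ [true])))
          ((S.part.erase c1).erase c2)) :
      Parse S S'

/-- The completely parsed (trivial) structure: undecomposed conclusions and a
single class consisting of all of them. -/
def Parsed (S : PPS) : Prop :=
  (∀ n ∈ S.names, S.occs n = {([] : List Bool)}) ∧ S.part = {S.leaves}

def WeakParse (S : PPS) : Prop :=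
  ∃ S', Relation.ReflTransGen Parse S S' ∧ Parsed S'

def StrongParse (S : PPS) : Prop :=
  ∀ S', Relation.ReflTransGen Parse S S' →
    ∃ S'', Relation.ReflTransGen Parse S' S'' ∧ Parsed S''

/-! ### Auxiliary infrastructure -/

section Aux

open Finset

abbrev Leaf := ℕ × List Bool

/-- basic list facts -/
lemma concat_ne_self (u : List Bool) (b : Bool) : u ++ [b] ≠ u := by
  intro h; have := congrArg List.length h; simp at this

lemma prefix_concat_self (u : List Bool) (b : Bool) : u <+: u ++ [b] := ⟨[b], rfl⟩

lemma prefix_concat_cases {w u : List Bool} {b : Bool} (h : w <+: u ++ [b]) :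
    w <+: u ∨ w = u ++ [b] := by
  rcases h with ⟨t, ht⟩
  rcases t.eq_nil_or_concat with rfl | ⟨t', x, rfl⟩
  · right
    have : w = u ++ [b] := by simpa using ht
    exact this
  · left
    have : (w ++ t') ++ [x] = u ++ [b] := by simpa using ht
    have h2 : w ++ t' = u := by
      have := congrArg (fun l => List.dropLast l) this
      simpa using this
    exact ⟨t', h2⟩

namespace MLLForm

lemma subAt_nil (A : MLLForm) : A.subAt [] = some A := by
  cases A <;> rfl

lemma subAt_append (u v : List Bool) (A : MLLForm) :
    A.subAt (u ++ v) = (A.subAt u).bind (fun B => B.subAt v) := by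
  induction u generalizing A with
  | nil => simp [subAt]
  | cons b u ih =>
    cases A with
    | atomP k => cases b <;> simp [subAt]
    | atomN k => cases b <;> simp [subAt]
    | tens a c => cases b <;> simp [subAt, ih]
    | parr a c => cases b <;> simp [subAt, ih]

lemma subAt_parr_child {A : MLLForm} {u : List Bool} {a b : MLLForm}
    (h : A.subAt u = some (.parr a b)) (c : Bool) :
    A.subAt (u ++ [c]) = some (if c then b else a) := by
  rw [subAt_append, h]; cases c <;> simp [subAt]

lemma subAt_tens_child {A : MLLForm} {u : List Bool} {a b : MLLForm}
    (h : A.subAt u = some (.tens a b)) (c : Bool) :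
    A.subAt (u ++ [c]) = some (if c then b else a) := by
  rw [subAt_append, h]; cases c <;> simp [subAt]

end MLLForm

namespace PPS

lemma mem_leaves {S : PPS} {x : Leaf} :
    x ∈ S.leaves ↔ x.1 ∈ S.names ∧ x.2 ∈ S.occs x.1 := by
  obtain ⟨m, w⟩ := x
  simp only [leaves, Finset.mem_biUnion, Finset.mem_image]
  constructor
  · rintro ⟨m', hm', w', hw', h⟩
    obtain ⟨rfl, rfl⟩ : m' = m ∧ w' = w := by
      constructor <;> [exact congrArg Prod.fst h; exact congrArg Prod.snd h]
    exact ⟨hm', hw'⟩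
  · rintro ⟨h1, h2⟩; exact ⟨m, h1, w, h2, rfl⟩

/-- accessors for WF -/
lemma WF.subAt_isSome {S : PPS} (h : S.WF) {n : ℕ} (hn : n ∈ S.names)
    {u : List Bool} (hu : u ∈ S.occs n) : ((S.form n).subAt u).isSome := h.1 n hn u hu

lemma WF.prefix_free {S : PPS} (h : S.WF) {n : ℕ} (hn : n ∈ S.names)
    {u v : List Bool} (hu : u ∈ S.occs n) (hv : v ∈ S.occs n) (hne : u ≠ v) :
    ¬ u <+: v := h.2.1 n hn u hu v hv hne

lemma WF.class_nonempty {S : PPS} (h : S.WF) {c : Finset Leaf} (hc : c ∈ S.part) :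
    c.Nonempty := h.2.2.1 c hc

lemma WF.class_disjoint {S : PPS} (h : S.WF) {c d : Finset Leaf} (hc : c ∈ S.part)
    (hd : d ∈ S.part) (hne : c ≠ d) : Disjoint c d := h.2.2.2.1 c hc d hd hne

lemma WF.biUnion_eq {S : PPS} (h : S.WF) : S.part.biUnion id = S.leaves := h.2.2.2.2

lemma WF.class_subset_leaves {S : PPS} (h : S.WF) {c : Finset Leaf} (hc : c ∈ S.part) :
    c ⊆ S.leaves := by
  intro x hx
  rw [← h.biUnion_eq]
  exact Finset.mem_biUnion.2 ⟨c, hc, hx⟩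

lemma WF.mem_class {S : PPS} (h : S.WF) {c : Finset Leaf} (hc : c ∈ S.part)
    {x : Leaf} (hx : x ∈ c) : x.1 ∈ S.names ∧ x.2 ∈ S.occs x.1 :=
  mem_leaves.1 (h.class_subset_leaves hc hx)

/-- a parent of an occurrence is not an occurrence, in a WF structure -/
lemma WF.parent_not_occ {S : PPS} (h : S.WF) {n : ℕ} (hn : n ∈ S.names)
    {u : List Bool} {b : Bool} (hu : u ++ [b] ∈ S.occs n) : u ∉ S.occs n := by
  intro hmem
  exact h.prefix_free hn hmem hu (fun e => concat_ne_self u b e.symm)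
    (prefix_concat_self u b)

/-- a child of an occurrence is not an occurrence -/
lemma WF.child_not_occ {S : PPS} (h : S.WF) {n : ℕ} (hn : n ∈ S.names)
    {u : List Bool} (hu : u ∈ S.occs n) (b : Bool) : u ++ [b] ∉ S.occs n := by
  intro hmem
  exact h.prefix_free hn hu hmem (fun e => concat_ne_self u b e.symm) (prefix_concat_self u b)

end PPS

/-- relab1 facts -/
lemma relab1_eq (m0 n : ℕ) (b : Bool) (v : List Bool) :
    relab1 m0 n b (m0, v) = (n, b :: v) := by simp [relab1]

lemma relab1_ne (m0 n : ℕ) (b : Bool) {x : Leaf} (h : x.1 ≠ m0) :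
    relab1 m0 n b x = x := by simp [relab1, h]

end Aux

section Aux2
open Finset

/-- erase and image under injectivity on the set -/
lemma image_erase_of_injOn {α β : Type*} [DecidableEq α] [DecidableEq β] {f : α → β}
    {s : Finset α} (h : Set.InjOn f ↑s) {a : α} (ha : a ∈ s) :
    (s.erase a).image f = (s.image f).erase (f a) := by
  ext y
  simp only [Finset.mem_image, Finset.mem_erase]
  constructor
  · rintro ⟨x, ⟨hxa, hxs⟩, rfl⟩
    exact ⟨fun e => hxa (h hxs ha e), ⟨x, hxs, rfl⟩⟩
  · rintro ⟨hy, ⟨x, hxs, rfl⟩⟩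
    exact ⟨x, ⟨fun e => hy (by rw [e]), hxs⟩, rfl⟩

lemma image_eq_image_iff_of_injOn {α β : Type*} [DecidableEq α] [DecidableEq β]
    {f : α → β} {A : Set α} (h : Set.InjOn f A) {c d : Finset α}
    (hc : ↑c ⊆ A) (hd : ↑d ⊆ A) (he : c.image f = d.image f) : c = d := by
  ext x
  constructor
  · intro hx
    have : f x ∈ d.image f := he ▸ Finset.mem_image_of_mem f hx
    obtain ⟨y, hy, hxy⟩ := Finset.mem_image.1 this
    rwa [← h (hd hy) (hc hx) hxy]
  · intro hx
    have : f x ∈ c.image f := he.symm ▸ Finset.mem_image_of_mem f hx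
    obtain ⟨y, hy, hxy⟩ := Finset.mem_image.1 this
    rwa [← h (hc hy) (hd hx) hxy]

lemma mem_biUnion_erase {P : Finset (Finset Leaf)}
    (hd : ∀ c ∈ P, ∀ d ∈ P, c ≠ d → Disjoint c d) {c : Finset Leaf} (hc : c ∈ P)
    (x : Leaf) : x ∈ (P.erase c).biUnion id ↔ x ∈ P.biUnion id ∧ x ∉ c := by
  simp only [Finset.mem_biUnion, Finset.mem_erase, id]
  constructor
  · rintro ⟨d, ⟨hne, hdP⟩, hx⟩
    exact ⟨⟨d, hdP, hx⟩, fun hxc =>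
      (Finset.disjoint_left.1 (hd d hdP c hc hne)) hx hxc⟩
  · rintro ⟨⟨d, hdP, hx⟩, hxc⟩
    exact ⟨d, ⟨fun e => hxc (e ▸ hx), hdP⟩, hx⟩

lemma mem_biUnion_erase2 {P : Finset (Finset Leaf)}
    (hd : ∀ c ∈ P, ∀ d ∈ P, c ≠ d → Disjoint c d) {c1 c2 : Finset Leaf}
    (hc1 : c1 ∈ P) (hc2 : c2 ∈ P)
    (x : Leaf) : x ∈ ((P.erase c1).erase c2).biUnion id ↔
      x ∈ P.biUnion id ∧ x ∉ c1 ∧ x ∉ c2 := by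
  by_cases h12 : c2 = c1
  · subst h12
    rw [Finset.erase_idem, mem_biUnion_erase hd hc1]; tauto
  by_cases hc2' : c2 ∈ P.erase c1
  · rw [mem_biUnion_erase (fun a ha b hb => hd a (Finset.mem_of_mem_erase ha) b
      (Finset.mem_of_mem_erase hb)) hc2', mem_biUnion_erase hd hc1]
    tauto
  · exact absurd (Finset.mem_erase.2 ⟨h12, hc2⟩) hc2'

/-- characterization of leaves after the occurrence surgery of a parse step -/
lemma parse_leaves_char {S T : PPS} (hWF : S.WF) {n : ℕ} {u : List Bool}
    (hn : n ∈ S.names)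
    (h0 : u ++ [false] ∈ S.occs n) (h1 : u ++ [true] ∈ S.occs n)
    (hnames : T.names = S.names)
    (hoccs : T.occs n =
      insert u (((S.occs n).erase (u ++ [false])).erase (u ++ [true])))
    (hoccso : ∀ m ∈ S.names, m ≠ n → T.occs m = S.occs m) (x : Leaf) :
    x ∈ T.leaves ↔ x = (n, u) ∨
      (x ∈ S.leaves ∧ x ≠ (n, u ++ [false]) ∧ x ≠ (n, u ++ [true])) := by
  obtain ⟨m, w⟩ := x
  by_cases hm : m = n
  · subst hm
    simp only [PPS.mem_leaves, hnames, hoccs, Finset.mem_insert, Finset.mem_erase,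
      ne_eq, Prod.mk.injEq, eq_self_iff_true, true_and]
    tauto
  · have e : T.occs m = S.occs m ∨ m ∉ S.names := by
      by_cases hms : m ∈ S.names
      · exact Or.inl (hoccso m hms hm)
      · exact Or.inr hms
    simp only [PPS.mem_leaves, hnames, ne_eq, Prod.mk.injEq]
    rcases e with e | e
    · rw [e]; tauto
    · tauto

/-- prefix-freeness is preserved by the occurrence surgery -/
lemma parse_prefix_free {S T : PPS} (hWF : S.WF) {n : ℕ} {u : List Bool}
    (hn : n ∈ S.names)
    (h0 : u ++ [false] ∈ S.occs n) (h1 : u ++ [true] ∈ S.occs n)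
    (hoccs : T.occs n =
      insert u (((S.occs n).erase (u ++ [false])).erase (u ++ [true]))) :
    ∀ w ∈ T.occs n, ∀ w' ∈ T.occs n, w ≠ w' → ¬ w <+: w' := by
  have hu : u ∉ S.occs n := hWF.parent_not_occ hn h0
  intro w hw w' hw' hne hpre
  rw [hoccs] at hw hw'
  simp only [Finset.mem_insert, Finset.mem_erase] at hw hw'
  rcases hw with hwu | ⟨hw1, hw2, hwS⟩
  · subst hwu
    rcases hw' with hwu' | ⟨hw1', hw2', hw'S⟩
    · exact hne hwu'.symm
    · obtain ⟨t, rfl⟩ := hpre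
      cases t with
      | nil => exact hu (by simpa using hw'S)
      | cons b t' =>
        have hb : (w ++ [b]) <+: w ++ b :: t' := ⟨t', by simp⟩
        have hbS : w ++ [b] ∈ S.occs n := by cases b; exact h0; exact h1
        have hne3 : w ++ [b] ≠ w ++ b :: t' := by
          intro e; cases b
          · exact hw2' e.symm
          · exact hw1' e.symm
        exact hWF.prefix_free hn hbS hw'S hne3 hb
  · rcases hw' with hwu' | ⟨hw1', hw2', hw'S⟩
    · subst hwu'
      have hpre' : w <+: w' ++ [false] := hpre.trans (prefix_concat_self w' false)
      have hne2 : w ≠ w' ++ [false] := by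
        intro e; subst e
        have := hpre.length_le; simp at this
      exact hWF.prefix_free hn hwS h0 hne2 hpre'
    · exact hWF.prefix_free hn hwS hw'S hne hpre

end Aux2

section Aux3
open Finset

set_option maxHeartbeats 1000000 in
lemma parse_preserves_wf {S T : PPS} (hWF : S.WF) (h : Parse S T) : T.WF := by
  cases h with
  | parr n u a b c hn hf h0 h1 hc hc0 hc1 hnames hforms hoccs hoccso hpart =>
    have hu : u ∉ S.occs n := hWF.parent_not_occ hn h0
    refine ⟨?_, ?_, ?_, ?_, ?_⟩
    · -- subAt isSome
      intro m hm w hw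
      rw [hnames] at hm
      rw [hforms m hm]
      by_cases hmn : m = n
      · subst hmn
        rw [hoccs] at hw
        rcases Finset.mem_insert.1 hw with rfl | hw'
        · rw [hf]; rfl
        · exact hWF.subAt_isSome hm
            (Finset.mem_of_mem_erase (Finset.mem_of_mem_erase hw'))
      · rw [hoccso m hm hmn] at hw
        exact hWF.subAt_isSome hm hw
    · -- prefix free
      intro m hm w hw w' hw' hne
      rw [hnames] at hm
      by_cases hmn : m = n
      · subst hmn
        exact parse_prefix_free hWF hm h0 h1 hoccs w hw w' hw' hne
      · rw [hoccso m hm hmn] at hw hw'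
        exact hWF.prefix_free hm hw hw' hne
    · -- nonempty
      intro d hd
      rw [hpart] at hd
      rcases Finset.mem_insert.1 hd with rfl | hd'
      · exact ⟨(n, u), Finset.mem_insert_self _ _⟩
      · exact hWF.class_nonempty (Finset.mem_of_mem_erase hd')
    · -- disjoint
      have key : ∀ d ∈ S.part.erase c,
          Disjoint (insert (n, u) ((c.erase (n, u ++ [false])).erase (n, u ++ [true]))) d := by
        intro d hd
        rw [Finset.disjoint_left]
        intro x hx hxd
        rcases Finset.mem_insert.1 hx with rfl | hx'
        · have := (hWF.mem_class (Finset.mem_of_mem_erase hd) hxd).2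
          exact hu this
        · have hxc : x ∈ c := Finset.mem_of_mem_erase (Finset.mem_of_mem_erase hx')
          exact (Finset.disjoint_left.1 (hWF.class_disjoint hc
            (Finset.mem_of_mem_erase hd) (Ne.symm (Finset.mem_erase.1 hd).1))) hxc hxd
      intro d hd d' hd' hne
      rw [hpart] at hd hd'
      rcases Finset.mem_insert.1 hd with rfl | hd2
      · rcases Finset.mem_insert.1 hd' with rfl | hd2'
        · exact absurd rfl hne
        · exact key d' hd2'
      · rcases Finset.mem_insert.1 hd' with rfl | hd2'
        · exact (key d hd2).symm
        · exact hWF.class_disjoint (Finset.mem_of_mem_erase hd2)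
            (Finset.mem_of_mem_erase hd2') hne
    · -- biUnion
      ext x
      rw [hpart, Finset.biUnion_insert, Finset.mem_union,
        mem_biUnion_erase hWF.2.2.2.1 hc, hWF.biUnion_eq,
        parse_leaves_char hWF hn h0 h1 hnames hoccs hoccso x]
      have hsub : x ∈ c → x ∈ S.leaves := fun h => hWF.class_subset_leaves hc h
      have hq1 : x = (n, u ++ [false]) → x ∈ c := fun h => h ▸ hc0
      have hq2 : x = (n, u ++ [true]) → x ∈ c := fun h => h ▸ hc1
      have hp : x = (n, u) → x ∉ S.leaves := by
        rintro rfl hmem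
        exact hu (PPS.mem_leaves.1 hmem).2
      simp only [id, Finset.mem_insert, Finset.mem_erase]
      tauto
  | tens n u a b c1 c2 hn hf h0 h1 hc1 hc2 hne12 hm0 hm1 hnames hforms hoccs
      hoccso hpart =>
    have hu : u ∉ S.occs n := hWF.parent_not_occ hn h0
    refine ⟨?_, ?_, ?_, ?_, ?_⟩
    · intro m hm w hw
      rw [hnames] at hm
      rw [hforms m hm]
      by_cases hmn : m = n
      · subst hmn
        rw [hoccs] at hw
        rcases Finset.mem_insert.1 hw with rfl | hw'
        · rw [hf]; rfl
        · exact hWF.subAt_isSome hm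
            (Finset.mem_of_mem_erase (Finset.mem_of_mem_erase hw'))
      · rw [hoccso m hm hmn] at hw
        exact hWF.subAt_isSome hm hw
    · intro m hm w hw w' hw' hne
      rw [hnames] at hm
      by_cases hmn : m = n
      · subst hmn
        exact parse_prefix_free hWF hm h0 h1 hoccs w hw w' hw' hne
      · rw [hoccso m hm hmn] at hw hw'
        exact hWF.prefix_free hm hw hw' hne
    · intro d hd
      rw [hpart] at hd
      rcases Finset.mem_insert.1 hd with rfl | hd'
      · exact ⟨(n, u), Finset.mem_insert_self _ _⟩
      · exact hWF.class_nonempty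
          (Finset.mem_of_mem_erase (Finset.mem_of_mem_erase hd'))
    · have key : ∀ d ∈ (S.part.erase c1).erase c2,
          Disjoint (insert (n, u)
            (((c1 ∪ c2).erase (n, u ++ [false])).erase (n, u ++ [true]))) d := by
        intro d hd
        have hdP : d ∈ S.part :=
          Finset.mem_of_mem_erase (Finset.mem_of_mem_erase hd)
        have hdne1 : d ≠ c1 := (Finset.mem_erase.1 (Finset.mem_of_mem_erase hd)).1
        have hdne2 : d ≠ c2 := (Finset.mem_erase.1 hd).1
        rw [Finset.disjoint_left]
        intro x hx hxd
        rcases Finset.mem_insert.1 hx with rfl | hx'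
        · exact hu (hWF.mem_class hdP hxd).2
        · have hxc : x ∈ c1 ∪ c2 :=
            Finset.mem_of_mem_erase (Finset.mem_of_mem_erase hx')
          rcases Finset.mem_union.1 hxc with hx1 | hx2
          · exact (Finset.disjoint_left.1
              (hWF.class_disjoint hc1 hdP (Ne.symm hdne1))) hx1 hxd
          · exact (Finset.disjoint_left.1
              (hWF.class_disjoint hc2 hdP (Ne.symm hdne2))) hx2 hxd
      intro d hd d' hd' hne
      rw [hpart] at hd hd'
      rcases Finset.mem_insert.1 hd with rfl | hd2
      · rcases Finset.mem_insert.1 hd' with rfl | hd2'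
        · exact absurd rfl hne
        · exact key d' hd2'
      · rcases Finset.mem_insert.1 hd' with rfl | hd2'
        · exact (key d hd2).symm
        · exact hWF.class_disjoint
            (Finset.mem_of_mem_erase (Finset.mem_of_mem_erase hd2))
            (Finset.mem_of_mem_erase (Finset.mem_of_mem_erase hd2')) hne
    · ext x
      rw [hpart, Finset.biUnion_insert, Finset.mem_union,
        mem_biUnion_erase2 hWF.2.2.2.1 hc1 hc2, hWF.biUnion_eq,
        parse_leaves_char hWF hn h0 h1 hnames hoccs hoccso x]
      have hsub1 : x ∈ c1 → x ∈ S.leaves := fun h => hWF.class_subset_leaves hc1 h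
      have hsub2 : x ∈ c2 → x ∈ S.leaves := fun h => hWF.class_subset_leaves hc2 h
      have hq1 : x = (n, u ++ [false]) → x ∈ c1 := fun h => h ▸ hm0
      have hq2 : x = (n, u ++ [true]) → x ∈ c2 := fun h => h ▸ hm1
      have hp : x = (n, u) → x ∉ S.leaves := by
        rintro rfl hmem
        exact hu (PPS.mem_leaves.1 hmem).2
      simp only [id, Finset.mem_insert, Finset.mem_erase, Finset.mem_union]
      tauto

end Aux3

section Aux4
open Finset

/-- Strengthened sequentializability: as `SeqNet` but carrying well-formedness and
strict freshness, which makes the inversion used for de-parsing possible. -/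
inductive SeqNetW : PPS → Prop
  | ax (S : PPS)
      (h1 : ∀ n ∈ S.names, S.occs n = {([] : List Bool)})
      (h2 : S.part = {S.leaves}) (hWF : S.WF) : SeqNetW S
  | parr (S S' : PPS) (nB nC n : ℕ)
      (hSeq : SeqNetW S)
      (hnB : nB ∈ S.names) (hnC : nC ∈ S.names) (hne : nB ≠ nC)
      (hfresh : n ∉ S.names)
      (hnames : S'.names = insert n (S.names \ {nB, nC}))
      (hform : S'.form n = .parr (S.form nB) (S.form nC))
      (hformo : ∀ m ∈ S.names \ {nB, nC}, S'.form m = S.form m)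
      (hoccs : S'.occs n =
        (S.occs nB).image (fun u => false :: u) ∪ (S.occs nC).image (fun u => true :: u))
      (hoccso : ∀ m ∈ S.names \ {nB, nC}, S'.occs m = S.occs m)
      (hpart : S'.part = S.part.image
        (Finset.image (fun x => relab1 nB n false (relab1 nC n true x))))
      (hWF' : S'.WF) :
      SeqNetW S'
  | tens (S1 S2 S' : PPS) (nB nC n : ℕ)
      (hSeq1 : SeqNetW S1) (hSeq2 : SeqNetW S2)
      (hdisj : Disjoint S1.names S2.names)
      (hnB : nB ∈ S1.names) (hnC : nC ∈ S2.names)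
      (hfresh : n ∉ S1.names ∪ S2.names)
      (hnames : S'.names = insert n ((S1.names.erase nB) ∪ (S2.names.erase nC)))
      (hform : S'.form n = .tens (S1.form nB) (S2.form nC))
      (hform1 : ∀ m ∈ S1.names.erase nB, S'.form m = S1.form m)
      (hform2 : ∀ m ∈ S2.names.erase nC, S'.form m = S2.form m)
      (hoccs : S'.occs n =
        (S1.occs nB).image (fun u => false :: u) ∪ (S2.occs nC).image (fun u => true :: u))
      (hoccs1 : ∀ m ∈ S1.names.erase nB, S'.occs m = S1.occs m)
      (hoccs2 : ∀ m ∈ S2.names.erase nC, S'.occs m = S2.occs m)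
      (hpart : S'.part =
        S1.part.image (Finset.image (relab1 nB n false)) ∪
        S2.part.image (Finset.image (relab1 nC n true)))
      (hWF' : S'.WF) :
      SeqNetW S'

lemma SeqNetW.wf {S : PPS} (h : SeqNetW S) : S.WF := by
  cases h with
  | ax S h1 h2 hWF => exact hWF
  | parr S S' nB nC n hSeq hnB hnC hne hfresh hnames hform hformo hoccs hoccso hpart hWF' =>
    exact hWF'
  | tens S1 S2 S' nB nC n h1 h2 hd hnB hnC hf hn hfo hf1 hf2 ho ho1 ho2 hp hWF' => exact hWF'

lemma SeqNetW.toSeqNet {S : PPS} (h : SeqNetW S) : SeqNet S := by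
  induction h with
  | ax S h1 h2 hWF => exact SeqNet.ax S h1 h2
  | parr S S' nB nC n hSeq hnB hnC hne hfresh hnames hform hformo hoccs hoccso hpart hWF' ih =>
    exact SeqNet.parr S S' nB nC n ih hnB hnC hne
      (fun h => hfresh (Finset.mem_sdiff.1 h).1) hnames hform hformo hoccs hoccso hpart
  | tens S1 S2 S' nB nC n h1 h2 hd hnB hnC hf hn hfo hf1 hf2 ho ho1 ho2 hp hWF' ih1 ih2 =>
    exact SeqNet.tens S1 S2 S' nB nC n ih1 ih2 hd hnB hnC
      (fun h => hf (Finset.mem_sdiff.1 h).1) hn hfo hf1 hf2 ho ho1 ho2 hp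

end Aux4

section Aux5
open Finset

/-- inverse of the relabelling used by the par rule -/
def parG (nB nC n' : ℕ) : Leaf → Leaf := fun x =>
  if x.1 = n' then
    (match x.2 with
     | [] => x
     | false :: v => (nB, v)
     | true :: v => (nC, v))
  else x

/-- inverse of the relabelling used by (one side of) the tensor rule -/
def tensG (nB n : ℕ) (b : Bool) : Leaf → Leaf := fun x =>
  if x.1 = n then
    (match x.2, b with
     | false :: v, false => (nB, v)
     | true :: v, true => (nB, v)
     | _, _ => x)
  else x

lemma parG_fg {nB nC n' : ℕ} (hBC : nB ≠ nC) (hB : n' ≠ nB) (hC : n' ≠ nC)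
    (x : Leaf) (h1 : x.1 ≠ nB) (h2 : x.1 ≠ nC) :
    relab1 nB n' false (relab1 nC n' true (parG nB nC n' x)) = x := by
  obtain ⟨m, w⟩ := x
  simp only at h1 h2
  by_cases hm : m = n'
  · cases w with
    | nil => simp [relab1, parG, hm, h1, h2, hB, hC]
    | cons b v =>
      cases b
      · simp [relab1, parG, hm, hBC, hB, hC]
      · simp [relab1, parG, hm, hBC, hB, hC]
  · simp [relab1, parG, hm, h1, h2]

lemma parG_gf {nB nC n' : ℕ} (hBC : nB ≠ nC) (hB : n' ≠ nB) (hC : n' ≠ nC)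
    (x : Leaf) (h1 : x.1 ≠ n') :
    parG nB nC n' (relab1 nB n' false (relab1 nC n' true x)) = x := by
  obtain ⟨m, w⟩ := x
  simp only at h1
  by_cases hmB : m = nB
  · simp [relab1, parG, hmB, hBC, hB, hC]
  · by_cases hmC : m = nC
    · simp [relab1, parG, hmB, hmC, hBC, hB, hC]
    · simp [relab1, parG, hmB, hmC, h1]

lemma tensG_fg {nB n : ℕ} {b : Bool} (x : Leaf) (h1 : x.1 ≠ nB) :
    relab1 nB n b (tensG nB n b x) = x := by
  obtain ⟨m, w⟩ := x
  simp only at h1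
  by_cases hm : m = n
  · have h1' : ¬ n = nB := fun e => h1 (by rw [hm, e])
    cases w with
    | nil => cases b <;> simp [tensG, relab1, hm, h1, h1']
    | cons b' v => cases b' <;> cases b <;> simp [tensG, relab1, hm, h1, h1']
  · cases b <;> simp [tensG, relab1, hm, h1]

lemma tensG_gf {nB n : ℕ} {b : Bool} (x : Leaf) (h1 : x.1 ≠ n) :
    tensG nB n b (relab1 nB n b x) = x := by
  obtain ⟨m, w⟩ := x
  simp only at h1
  by_cases hmB : m = nB
  · cases b <;> simp [relab1, tensG, hmB, h1]
  · cases b <;> simp [relab1, tensG, hmB, h1]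

lemma parF_eval_B {nB nC n : ℕ} (hBC : nB ≠ nC) (v : List Bool) :
    relab1 nB n false (relab1 nC n true (nB, v)) = (n, false :: v) := by
  simp [relab1, hBC]

lemma parF_eval_C {nB nC n : ℕ} (hnB : n ≠ nB) (v : List Bool) :
    relab1 nB n false (relab1 nC n true (nC, v)) = (n, true :: v) := by
  simp [relab1, hnB]

lemma parF_eval_O {nB nC n m : ℕ} (h1 : m ≠ nB) (h2 : m ≠ nC) (v : List Bool) :
    relab1 nB n false (relab1 nC n true (m, v)) = (m, v) := by
  simp [relab1, h1, h2]

lemma relab1_eq' {m0 n : ℕ} {b : Bool} {x : Leaf} (h : x.1 = m0) :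
    relab1 m0 n b x = (n, b :: x.2) := by
  obtain ⟨x1, x2⟩ := x
  simp only at h
  subst h
  exact relab1_eq _ _ _ _

lemma image_image_id {f g : Leaf → Leaf} {d : Finset Leaf}
    (h : ∀ x ∈ d, g (f x) = x) : (d.image f).image g = d := by
  rw [Finset.image_image]
  conv_rhs => rw [← Finset.image_id (s := d)]
  exact Finset.image_congr (fun x hx => by simp [h x hx])

lemma surgery_invert {α : Type*} [DecidableEq α] {O O' : Finset α} {u x y : α}
    (hO : O' = insert u ((O.erase x).erase y)) (hx : x ∈ O) (hy : y ∈ O)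
    (hu : u ∉ O) (hxy : x ≠ y) :
    O = insert x (insert y (O'.erase u)) := by
  subst hO
  have hxu : x ≠ u := fun e => hu (e ▸ hx)
  have hyu : y ≠ u := fun e => hu (e ▸ hy)
  ext w
  have e1 : w = x → w ∈ O := fun e => e ▸ hx
  have e2 : w = y → w ∈ O := fun e => e ▸ hy
  have e3 : w ∈ O → w ≠ u := fun h e => hu (e ▸ h)
  simp only [Finset.mem_insert, Finset.mem_erase]
  tauto

lemma part_invert1 {P P' : Finset (Finset Leaf)} {c c' : Finset Leaf}
    (h : P' = insert c' (P.erase c)) (hc : c ∈ P) (hc' : c' ∉ P) :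
    P = insert c (P'.erase c') := by
  subst h
  ext d
  have e1 : d = c → d ∈ P := fun e => e ▸ hc
  have e2 : d ∈ P → d ≠ c' := fun h e => hc' (e ▸ h)
  simp only [Finset.mem_insert, Finset.mem_erase]
  tauto

lemma part_invert2 {P P' : Finset (Finset Leaf)} {c1 c2 c' : Finset Leaf}
    (h : P' = insert c' ((P.erase c1).erase c2)) (hc1 : c1 ∈ P) (hc2 : c2 ∈ P)
    (hc' : c' ∉ P) :
    P = insert c1 (insert c2 (P'.erase c')) := by
  subst h
  ext d
  have e1 : d = c1 → d ∈ P := fun e => e ▸ hc1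
  have e2 : d = c2 → d ∈ P := fun e => e ▸ hc2
  have e3 : d ∈ P → d ≠ c' := fun h e => hc' (e ▸ h)
  simp only [Finset.mem_insert, Finset.mem_erase]
  tauto

lemma occ_comp_left {A B : Finset (List Bool)} {u' : List Bool} :
    insert ((false :: u') ++ [false]) (insert ((false :: u') ++ [true])
      ((A.image (fun v => false :: v) ∪ B.image (fun v => true :: v)).erase (false :: u')))
    = (insert (u' ++ [false]) (insert (u' ++ [true]) (A.erase u'))).image
        (fun v => false :: v) ∪ B.image (fun v => true :: v) := by
  have hinj : Function.Injective (fun v : List Bool => false :: v) :=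
    fun a b h => by simpa using h
  rw [Finset.image_insert, Finset.image_insert, Finset.image_erase hinj,
    Finset.erase_union_distrib,
    Finset.erase_eq_of_notMem (by simp : (false :: u') ∉ B.image (fun v => true :: v)),
    ← Finset.insert_union, ← Finset.insert_union]
  rfl

lemma occ_comp_right {A B : Finset (List Bool)} {u' : List Bool} :
    insert ((true :: u') ++ [false]) (insert ((true :: u') ++ [true])
      ((A.image (fun v => false :: v) ∪ B.image (fun v => true :: v)).erase (true :: u')))
    = A.image (fun v => false :: v) ∪
      (insert (u' ++ [false]) (insert (u' ++ [true]) (B.erase u'))).image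
        (fun v => true :: v) := by
  have hinj : Function.Injective (fun v : List Bool => true :: v) :=
    fun a b h => by simpa using h
  rw [Finset.image_insert, Finset.image_insert, Finset.image_erase hinj,
    Finset.erase_union_distrib,
    Finset.erase_eq_of_notMem (by simp : (true :: u') ∉ A.image (fun v => false :: v)),
    Finset.union_comm (A.image _), ← Finset.insert_union, ← Finset.insert_union,
    Finset.union_comm _ (A.image _)]
  rfl

lemma sides_ne {T1 T2 : PPS} (hWF1 : T1.WF) (hWF2 : T2.WF)
    (hdisj : Disjoint T1.names T2.names) {nB nC n : ℕ}
    (h1 : n ∉ T1.names) (h2 : n ∉ T2.names) {d e : Finset Leaf}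
    (hd : d ∈ T1.part) (he : e ∈ T2.part) :
    d.image (relab1 nB n false) ≠ e.image (relab1 nC n true) := by
  intro hEq
  obtain ⟨x, hx⟩ := hWF1.class_nonempty hd
  have hmem : relab1 nB n false x ∈ e.image (relab1 nC n true) :=
    hEq ▸ Finset.mem_image_of_mem _ hx
  obtain ⟨y, hy, hxy⟩ := Finset.mem_image.1 hmem
  have hx1 : x.1 ∈ T1.names := (hWF1.mem_class hd hx).1
  have hy1 : y.1 ∈ T2.names := (hWF2.mem_class he hy).1
  obtain ⟨x1, x2⟩ := x
  obtain ⟨y1, y2⟩ := y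
  simp only at hx1 hy1
  by_cases hxB : x1 = nB <;> by_cases hyC : y1 = nC
  · subst hxB; subst hyC
    rw [relab1_eq, relab1_eq] at hxy
    simp at hxy
  · subst hxB
    rw [relab1_ne _ _ _ (by simpa using hyC), relab1_eq] at hxy
    have e : y1 = n := by simpa using congrArg Prod.fst hxy
    exact h2 (e ▸ hy1)
  · subst hyC
    rw [relab1_eq, relab1_ne _ _ _ (by simpa using hxB)] at hxy
    have e : x1 = n := by simpa using (congrArg Prod.fst hxy).symm
    exact h1 (e ▸ hx1)
  · rw [relab1_ne _ _ _ (by simpa using hyC), relab1_ne _ _ _ (by simpa using hxB)] at hxy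
    have e : y1 = x1 := by simpa using congrArg Prod.fst hxy
    exact (Finset.disjoint_left.1 hdisj) hx1 (e ▸ hy1)

end Aux5

section Aux6
open Finset

set_option maxHeartbeats 1000000 in
/-- Core de-parsing transport for a par parse step, pulled back along a
relabelling `f` with partial inverse `g` into a component `T0`. -/
lemma core_par (T0 : PPS) (hWF0 : T0.WF)
    (f g : Leaf → Leaf)
    (n n₀ : ℕ) (u u₀ : List Bool) (a b : MLLForm) (c : Finset Leaf)
    (hgf : ∀ x : Leaf, x.1 ∈ T0.names → g (f x) = x)
    (hfgc : ∀ x ∈ c, f (g x) = x)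
    (hfu : f (n₀, u₀) = (n, u))
    (hgu : ∀ b' : Bool, g (n, u ++ [b']) = (n₀, u₀ ++ [b']))
    (hgu0 : g (n, u) = (n₀, u₀))
    (hn₀ : n₀ ∈ T0.names)
    (hform₀ : (T0.form n₀).subAt u₀ = some (.parr a b))
    (hocc₀ : u₀ ∈ T0.occs n₀)
    (hcpart : Finset.image g
      (insert (n, u) ((c.erase (n, u ++ [false])).erase (n, u ++ [true]))) ∈ T0.part)
    (hcf : (n, u ++ [false]) ∈ c) (hct : (n, u ++ [true]) ∈ c)
    (hnuc : (n, u) ∉ c) :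
    ∃ S0 : PPS, Parse S0 T0 ∧ S0.WF ∧ S0.names = T0.names ∧ S0.form = T0.form ∧
      (∀ m, m ≠ n₀ → S0.occs m = T0.occs m) ∧
      S0.occs n₀ = insert (u₀ ++ [false]) (insert (u₀ ++ [true]) ((T0.occs n₀).erase u₀)) ∧
      S0.part.image (Finset.image f) =
        insert c ((T0.part.image (Finset.image f)).erase
          (insert (n, u) ((c.erase (n, u ++ [false])).erase (n, u ++ [true])))) := by
  classical
  set chf : Leaf := (n, u ++ [false]) with hchf
  set cht : Leaf := (n, u ++ [true]) with hcht
  set ch0f : Leaf := (n₀, u₀ ++ [false]) with hch0f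
  set ch0t : Leaf := (n₀, u₀ ++ [true]) with hch0t
  set cc' : Finset Leaf := insert (n, u) ((c.erase chf).erase cht) with hcc'
  set c0' : Finset Leaf := cc'.image g with hc0'
  set c0c : Finset Leaf := c.image g with hc0c
  have hchfne : chf ≠ cht := by simp [hchf, hcht]
  have hch0fne : ch0f ≠ ch0t := by simp [hch0f, hch0t]
  have hginj : Set.InjOn g ↑c := fun x hx y hy e => by
    rw [← hfgc x hx, ← hfgc y hy, e]
  have hfgc' : ∀ x ∈ cc', f (g x) = x := by
    intro x hx
    rcases Finset.mem_insert.1 hx with rfl | hx'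
    · rw [hgu0, hfu]
    · exact hfgc x (Finset.mem_of_mem_erase (Finset.mem_of_mem_erase hx'))
  have hginj' : Set.InjOn g ↑cc' := fun x hx y hy e => by
    rw [← hfgc' x hx, ← hfgc' y hy, e]
  have hcht_mem : cht ∈ c.erase chf := Finset.mem_erase.2 ⟨fun e => hchfne e.symm, hct⟩
  have hc0'eq : c0' = insert (n₀, u₀) ((c0c.erase ch0f).erase ch0t) := by
    rw [hc0', hcc', Finset.image_insert, hgu0]
    congr 1
    rw [image_erase_of_injOn (hginj.mono (by intro z hz; exact Finset.mem_of_mem_erase hz))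
      hcht_mem, image_erase_of_injOn hginj hcf, hgu, hgu]
  have hmem0f : ch0f ∈ c0c := by
    have := Finset.mem_image_of_mem g hcf
    rwa [hgu] at this
  have hmem0t : ch0t ∈ c0c := by
    have := Finset.mem_image_of_mem g hct
    rwa [hgu] at this
  have hnu0 : (n₀, u₀) ∉ c0c := by
    intro hmem
    obtain ⟨x, hx, hgx⟩ := Finset.mem_image.1 hmem
    have : x = (n, u) := by rw [← hfgc x hx, hgx, hfu]
    exact hnuc (this ▸ hx)
  have hnocc0f : u₀ ++ [false] ∉ T0.occs n₀ := hWF0.child_not_occ hn₀ hocc₀ false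
  have hnocc0t : u₀ ++ [true] ∉ T0.occs n₀ := hWF0.child_not_occ hn₀ hocc₀ true
  have hc0c_not : c0c ∉ T0.part := by
    intro hmem
    exact hnocc0f ((hWF0.mem_class hmem hmem0f).2)
  have hinjf : Set.InjOn f {x : Leaf | x.1 ∈ T0.names} := fun x hx y hy e => by
    rw [← hgf x hx, ← hgf y hy, e]
  have hclass_sub : ∀ d ∈ T0.part, (↑d : Set Leaf) ⊆ {x : Leaf | x.1 ∈ T0.names} :=
    fun d hd x hx => (hWF0.mem_class hd hx).1
  have hinjF : Set.InjOn (Finset.image f) ↑T0.part := by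
    intro d hd e he hEq
    exact image_eq_image_iff_of_injOn hinjf (hclass_sub d hd) (hclass_sub e he) hEq
  have hfc0' : c0'.image f = cc' := image_image_id hfgc'
  have hfc0c : c0c.image f = c := image_image_id hfgc
  have hnu0c0' : (n₀, u₀) ∈ c0' := by
    rw [hc0'eq]; exact Finset.mem_insert_self _ _
  refine ⟨⟨T0.names, T0.form,
      fun m => if m = n₀ then
        insert (u₀ ++ [false]) (insert (u₀ ++ [true]) ((T0.occs n₀).erase u₀))
      else T0.occs m,
      insert c0c (T0.part.erase c0')⟩, ?_, ?_, rfl, rfl,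
    fun m hm => if_neg hm, if_pos rfl, ?_⟩
  · -- Parse S0 T0
    refine Parse.parr _ _ n₀ u₀ a b c0c hn₀ hform₀ ?_ ?_ (Finset.mem_insert_self _ _)
      hmem0f hmem0t rfl (fun _ _ => rfl) ?_ (fun m _ hm => (if_neg hm).symm) ?_
    · show u₀ ++ [false] ∈ if n₀ = n₀ then _ else _
      rw [if_pos rfl]; exact Finset.mem_insert_self _ _
    · show u₀ ++ [true] ∈ if n₀ = n₀ then _ else _
      rw [if_pos rfl]; exact Finset.mem_insert_of_mem (Finset.mem_insert_self _ _)
    · -- occurrence surgery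
      show T0.occs n₀ = insert u₀ (((if n₀ = n₀ then _ else _ : Finset (List Bool)).erase
        (u₀ ++ [false])).erase (u₀ ++ [true]))
      rw [if_pos rfl]
      rw [Finset.erase_insert (by
        intro h
        rcases Finset.mem_insert.1 h with h | h
        · exact (by simp : (u₀ : List Bool) ++ [false] ≠ u₀ ++ [true]) h
        · exact hnocc0f (Finset.mem_of_mem_erase h))]
      rw [Finset.erase_insert (fun h => hnocc0t (Finset.mem_of_mem_erase h))]
      rw [Finset.insert_erase hocc₀]
    · -- partition surgery
      dsimp only
      rw [← hc0'eq]
      rw [Finset.erase_insert (fun h => hc0c_not (Finset.mem_of_mem_erase h)),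
        Finset.insert_erase hcpart]
  · -- WF
    have hoccn : ∀ w, w ∈ (insert (u₀ ++ [false]) (insert (u₀ ++ [true])
        ((T0.occs n₀).erase u₀))) ↔
        w = u₀ ++ [false] ∨ w = u₀ ++ [true] ∨ (w ≠ u₀ ∧ w ∈ T0.occs n₀) := by
      intro w; simp only [Finset.mem_insert, Finset.mem_erase]
    refine ⟨?_, ?_, ?_, ?_, ?_⟩
    · -- subAt defined
      intro m hm w hw
      dsimp only at hw ⊢
      by_cases hmn : m = n₀
      · subst hmn
        rw [if_pos rfl] at hw
        rcases (hoccn w).1 hw with rfl | rfl | ⟨_, hw'⟩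
        · rw [MLLForm.subAt_parr_child hform₀ false]; rfl
        · rw [MLLForm.subAt_parr_child hform₀ true]; rfl
        · exact hWF0.subAt_isSome hm hw'
      · rw [if_neg hmn] at hw
        exact hWF0.subAt_isSome hm hw
    · -- prefix free
      intro m hm w hw w' hw' hne hpre
      dsimp only at hw hw'
      by_cases hmn : m = n₀
      · subst hmn
        rw [if_pos rfl] at hw hw'
        rcases (hoccn w).1 hw with rfl | rfl | ⟨hwu, hwO⟩
        · rcases (hoccn w').1 hw' with rfl | rfl | ⟨hwu', hwO'⟩
          · exact hne rfl
          · have := hpre.eq_of_length (by simp)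
            simp at this
          · exact hWF0.prefix_free hm hocc₀ hwO' (Ne.symm hwu')
              ((prefix_concat_self u₀ false).trans hpre)
        · rcases (hoccn w').1 hw' with rfl | rfl | ⟨hwu', hwO'⟩
          · have := hpre.eq_of_length (by simp)
            simp at this
          · exact hne rfl
          · exact hWF0.prefix_free hm hocc₀ hwO' (Ne.symm hwu')
              ((prefix_concat_self u₀ true).trans hpre)
        · rcases (hoccn w').1 hw' with rfl | rfl | ⟨hwu', hwO'⟩
          · rcases prefix_concat_cases hpre with hp | rfl
            · exact hWF0.prefix_free hm hwO hocc₀ hwu hp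
            · exact hnocc0f hwO
          · rcases prefix_concat_cases hpre with hp | rfl
            · exact hWF0.prefix_free hm hwO hocc₀ hwu hp
            · exact hnocc0t hwO
          · exact hWF0.prefix_free hm hwO hwO' hne hpre
      · rw [if_neg hmn] at hw hw'
        exact hWF0.prefix_free hm hw hw' hne hpre
    · -- nonempty
      intro d hd
      dsimp only at hd
      rcases Finset.mem_insert.1 hd with rfl | hd'
      · exact ⟨ch0f, hmem0f⟩
      · exact hWF0.class_nonempty (Finset.mem_of_mem_erase hd')
    · -- disjoint
      have key : ∀ d ∈ T0.part.erase c0', Disjoint c0c d := by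
        intro d hd
        have hdP : d ∈ T0.part := Finset.mem_of_mem_erase hd
        have hdne : d ≠ c0' := (Finset.mem_erase.1 hd).1
        rw [Finset.disjoint_left]
        intro x hx hxd
        obtain ⟨y, hy, rfl⟩ := Finset.mem_image.1 hx
        by_cases hy1 : y = chf
        · subst hy1
          rw [hgu] at hxd
          exact hnocc0f ((hWF0.mem_class hdP hxd).2)
        · by_cases hy2 : y = cht
          · subst hy2
            rw [hgu] at hxd
            exact hnocc0t ((hWF0.mem_class hdP hxd).2)
          · have hyc : y ∈ cc' := Finset.mem_insert_of_mem
              (Finset.mem_erase.2 ⟨hy2, Finset.mem_erase.2 ⟨hy1, hy⟩⟩)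
            have : g y ∈ c0' := Finset.mem_image_of_mem g hyc
            exact (Finset.disjoint_left.1
              (hWF0.class_disjoint hcpart hdP (Ne.symm hdne))) this hxd
      intro d hd d' hd' hne
      dsimp only at hd hd'
      rcases Finset.mem_insert.1 hd with rfl | hd2
      · rcases Finset.mem_insert.1 hd' with rfl | hd2'
        · exact absurd rfl hne
        · exact key d' hd2'
      · rcases Finset.mem_insert.1 hd' with rfl | hd2'
        · exact (key d hd2).symm
        · exact hWF0.class_disjoint (Finset.mem_of_mem_erase hd2)
            (Finset.mem_of_mem_erase hd2') hne
    · -- biUnion = leaves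
      ext x
      dsimp only
      rw [Finset.biUnion_insert, Finset.mem_union,
        mem_biUnion_erase hWF0.2.2.2.1 hcpart, hWF0.biUnion_eq]
      have hchar : x ∈ PPS.leaves ⟨T0.names, T0.form,
          fun m => if m = n₀ then insert (u₀ ++ [false]) (insert (u₀ ++ [true])
            ((T0.occs n₀).erase u₀)) else T0.occs m,
          insert c0c (T0.part.erase c0')⟩ ↔
          x = ch0f ∨ x = ch0t ∨ (x ∈ T0.leaves ∧ x ≠ (n₀, u₀)) := by
        obtain ⟨m, w⟩ := x
        rw [PPS.mem_leaves, PPS.mem_leaves]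
        dsimp only
        by_cases hmn : m = n₀
        · subst hmn
          rw [if_pos rfl]
          simp only [hoccn, hch0f, hch0t, ne_eq, Prod.mk.injEq, eq_self_iff_true, true_and]
          tauto
        · rw [if_neg hmn]
          simp only [hch0f, hch0t, ne_eq, Prod.mk.injEq]
          tauto
      rw [hchar]
      have hA : x ∈ c0c → x = ch0f ∨ x = ch0t ∨ (x ∈ c0' ∧ x ≠ (n₀, u₀)) := by
        intro hx
        by_cases e1 : x = ch0f
        · exact Or.inl e1
        by_cases e2 : x = ch0t
        · exact Or.inr (Or.inl e2)
        refine Or.inr (Or.inr ⟨?_, fun e => hnu0 (e ▸ hx)⟩)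
        rw [hc0'eq]
        exact Finset.mem_insert_of_mem
          (Finset.mem_erase.2 ⟨e2, Finset.mem_erase.2 ⟨e1, hx⟩⟩)
      have hB : x ∈ c0' → x ∈ T0.leaves := fun h => hWF0.class_subset_leaves hcpart h
      have hC : x ∈ c0' → x ≠ (n₀, u₀) → x ∈ c0c := by
        intro hx hne
        rw [hc0'eq] at hx
        rcases Finset.mem_insert.1 hx with rfl | hx'
        · exact absurd rfl hne
        · exact Finset.mem_of_mem_erase (Finset.mem_of_mem_erase hx')
      have hD1 : x = ch0f → x ∈ c0c := fun e => e ▸ hmem0f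
      have hD2 : x = ch0t → x ∈ c0c := fun e => e ▸ hmem0t
      have hE : x = ch0f ∨ x = ch0t → x ∉ c0' → True := fun _ _ => trivial
      constructor
      · rintro (hx | ⟨hl, hnc⟩)
        · rcases hA hx with e | e | ⟨h1, h2⟩
          · exact Or.inl e
          · exact Or.inr (Or.inl e)
          · exact Or.inr (Or.inr ⟨hB h1, h2⟩)
        · refine Or.inr (Or.inr ⟨hl, fun e => hnc (e ▸ hnu0c0')⟩)
      · rintro (e | e | ⟨hl, hne⟩)
        · exact Or.inl (hD1 e)
        · exact Or.inl (hD2 e)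
        · by_cases hx : x ∈ c0'
          · exact Or.inl (hC hx hne)
          · exact Or.inr ⟨hl, hx⟩
  · -- partition image
    show (insert c0c (T0.part.erase c0')).image (Finset.image f) = _
    rw [Finset.image_insert, hfc0c,
      image_erase_of_injOn hinjF hcpart, hfc0']

end Aux6

section Aux7
open Finset

set_option maxHeartbeats 1000000 in
/-- Core de-parsing transport for a tensor parse step. -/
lemma core_tens (T0 : PPS) (hWF0 : T0.WF)
    (f g : Leaf → Leaf)
    (n n₀ : ℕ) (u u₀ : List Bool) (a b : MLLForm) (c1 c2 : Finset Leaf)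
    (hgf : ∀ x : Leaf, x.1 ∈ T0.names → g (f x) = x)
    (hfgc : ∀ x ∈ c1 ∪ c2, f (g x) = x)
    (hfu : f (n₀, u₀) = (n, u))
    (hgu : ∀ b' : Bool, g (n, u ++ [b']) = (n₀, u₀ ++ [b']))
    (hgu0 : g (n, u) = (n₀, u₀))
    (hn₀ : n₀ ∈ T0.names)
    (hform₀ : (T0.form n₀).subAt u₀ = some (.tens a b))
    (hocc₀ : u₀ ∈ T0.occs n₀)
    (hcpart : Finset.image g
      (insert (n, u) (((c1 ∪ c2).erase (n, u ++ [false])).erase (n, u ++ [true]))) ∈ T0.part)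
    (hm0 : (n, u ++ [false]) ∈ c1) (hm1 : (n, u ++ [true]) ∈ c2)
    (hne12 : c1 ≠ c2) (hdisj12 : Disjoint c1 c2)
    (hnuc : (n, u) ∉ c1 ∪ c2) :
    ∃ S0 : PPS, Parse S0 T0 ∧ S0.WF ∧ S0.names = T0.names ∧ S0.form = T0.form ∧
      (∀ m, m ≠ n₀ → S0.occs m = T0.occs m) ∧
      S0.occs n₀ = insert (u₀ ++ [false]) (insert (u₀ ++ [true]) ((T0.occs n₀).erase u₀)) ∧
      S0.part.image (Finset.image f) =
        insert c1 (insert c2 ((T0.part.image (Finset.image f)).erase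
          (insert (n, u) (((c1 ∪ c2).erase (n, u ++ [false])).erase (n, u ++ [true]))))) := by
  classical
  set chf : Leaf := (n, u ++ [false]) with hchf
  set cht : Leaf := (n, u ++ [true]) with hcht
  set ch0f : Leaf := (n₀, u₀ ++ [false]) with hch0f
  set ch0t : Leaf := (n₀, u₀ ++ [true]) with hch0t
  set cc' : Finset Leaf := insert (n, u) (((c1 ∪ c2).erase chf).erase cht) with hcc'
  set c0' : Finset Leaf := cc'.image g with hc0'
  set c01 : Finset Leaf := c1.image g with hc01
  set c02 : Finset Leaf := c2.image g with hc02
  have hchfne : chf ≠ cht := by simp [hchf, hcht]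
  have hch0fne : ch0f ≠ ch0t := by simp [hch0f, hch0t]
  have hfgc1 : ∀ x ∈ c1, f (g x) = x := fun x hx => hfgc x (Finset.mem_union_left _ hx)
  have hfgc2 : ∀ x ∈ c2, f (g x) = x := fun x hx => hfgc x (Finset.mem_union_right _ hx)
  have hginj : Set.InjOn g ↑(c1 ∪ c2) := fun x hx y hy e => by
    rw [← hfgc x hx, ← hfgc y hy, e]
  have hfgc' : ∀ x ∈ cc', f (g x) = x := by
    intro x hx
    rcases Finset.mem_insert.1 hx with rfl | hx'
    · rw [hgu0, hfu]
    · exact hfgc x (Finset.mem_of_mem_erase (Finset.mem_of_mem_erase hx'))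
  have hginj' : Set.InjOn g ↑cc' := fun x hx y hy e => by
    rw [← hfgc' x hx, ← hfgc' y hy, e]
  have hchf_mem : chf ∈ c1 ∪ c2 := Finset.mem_union_left _ hm0
  have hcht_mem : cht ∈ (c1 ∪ c2).erase chf :=
    Finset.mem_erase.2 ⟨fun e => hchfne e.symm, Finset.mem_union_right _ hm1⟩
  have hc0'eq : c0' = insert (n₀, u₀) (((c01 ∪ c02).erase ch0f).erase ch0t) := by
    rw [hc0', hcc', Finset.image_insert, hgu0]
    congr 1
    rw [image_erase_of_injOn (hginj.mono (by intro z hz; exact Finset.mem_of_mem_erase hz))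
      hcht_mem, image_erase_of_injOn hginj hchf_mem, hgu, hgu, Finset.image_union]
  have hmem0f : ch0f ∈ c01 := by
    have := Finset.mem_image_of_mem g hm0
    rwa [hgu] at this
  have hmem0t : ch0t ∈ c02 := by
    have := Finset.mem_image_of_mem g hm1
    rwa [hgu] at this
  have hnu01 : (n₀, u₀) ∉ c01 := by
    intro hmem
    obtain ⟨x, hx, hgx⟩ := Finset.mem_image.1 hmem
    have : x = (n, u) := by rw [← hfgc1 x hx, hgx, hfu]
    exact hnuc (this ▸ Finset.mem_union_left _ hx)
  have hnu02 : (n₀, u₀) ∉ c02 := by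
    intro hmem
    obtain ⟨x, hx, hgx⟩ := Finset.mem_image.1 hmem
    have : x = (n, u) := by rw [← hfgc2 x hx, hgx, hfu]
    exact hnuc (this ▸ Finset.mem_union_right _ hx)
  have hnocc0f : u₀ ++ [false] ∉ T0.occs n₀ := hWF0.child_not_occ hn₀ hocc₀ false
  have hnocc0t : u₀ ++ [true] ∉ T0.occs n₀ := hWF0.child_not_occ hn₀ hocc₀ true
  have hc01_not : c01 ∉ T0.part := by
    intro hmem
    exact hnocc0f ((hWF0.mem_class hmem hmem0f).2)
  have hc02_not : c02 ∉ T0.part := by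
    intro hmem
    exact hnocc0t ((hWF0.mem_class hmem hmem0t).2)
  have hinjf : Set.InjOn f {x : Leaf | x.1 ∈ T0.names} := fun x hx y hy e => by
    rw [← hgf x hx, ← hgf y hy, e]
  have hclass_sub : ∀ d ∈ T0.part, (↑d : Set Leaf) ⊆ {x : Leaf | x.1 ∈ T0.names} :=
    fun d hd x hx => (hWF0.mem_class hd hx).1
  have hinjF : Set.InjOn (Finset.image f) ↑T0.part := by
    intro d hd e he hEq
    exact image_eq_image_iff_of_injOn hinjf (hclass_sub d hd) (hclass_sub e he) hEq
  have hfc0' : c0'.image f = cc' := image_image_id hfgc'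
  have hfc01 : c01.image f = c1 := image_image_id hfgc1
  have hfc02 : c02.image f = c2 := image_image_id hfgc2
  have hne012 : c01 ≠ c02 := by
    intro e
    exact hne12 (by rw [← hfc01, ← hfc02, e])
  have hdisj012 : Disjoint c01 c02 := by
    rw [Finset.disjoint_left]
    intro x hx1 hx2
    obtain ⟨y1, hy1, he1⟩ := Finset.mem_image.1 hx1
    obtain ⟨y2, hy2, he2⟩ := Finset.mem_image.1 hx2
    have : y1 = y2 := hginj (Finset.mem_coe.2 (Finset.mem_union_left _ hy1))
      (Finset.mem_coe.2 (Finset.mem_union_right _ hy2)) (he1.trans he2.symm)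
    exact (Finset.disjoint_left.1 hdisj12) hy1 (this ▸ hy2)
  have hnu0c0' : (n₀, u₀) ∈ c0' := by
    rw [hc0'eq]; exact Finset.mem_insert_self _ _
  refine ⟨⟨T0.names, T0.form,
      fun m => if m = n₀ then
        insert (u₀ ++ [false]) (insert (u₀ ++ [true]) ((T0.occs n₀).erase u₀))
      else T0.occs m,
      insert c01 (insert c02 (T0.part.erase c0'))⟩, ?_, ?_, rfl, rfl,
    fun m hm => if_neg hm, if_pos rfl, ?_⟩
  · -- Parse S0 T0
    refine Parse.tens _ _ n₀ u₀ a b c01 c02 hn₀ hform₀ ?_ ?_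
      (Finset.mem_insert_self _ _)
      (Finset.mem_insert_of_mem (Finset.mem_insert_self _ _)) hne012
      hmem0f hmem0t rfl (fun _ _ => rfl) ?_ (fun m _ hm => (if_neg hm).symm) ?_
    · show u₀ ++ [false] ∈ if n₀ = n₀ then _ else _
      rw [if_pos rfl]; exact Finset.mem_insert_self _ _
    · show u₀ ++ [true] ∈ if n₀ = n₀ then _ else _
      rw [if_pos rfl]; exact Finset.mem_insert_of_mem (Finset.mem_insert_self _ _)
    · show T0.occs n₀ = insert u₀ (((if n₀ = n₀ then _ else _ : Finset (List Bool)).erase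
        (u₀ ++ [false])).erase (u₀ ++ [true]))
      rw [if_pos rfl]
      rw [Finset.erase_insert (by
        intro h
        rcases Finset.mem_insert.1 h with h | h
        · exact (by simp : (u₀ : List Bool) ++ [false] ≠ u₀ ++ [true]) h
        · exact hnocc0f (Finset.mem_of_mem_erase h))]
      rw [Finset.erase_insert (fun h => hnocc0t (Finset.mem_of_mem_erase h))]
      rw [Finset.insert_erase hocc₀]
    · -- partition surgery
      dsimp only
      rw [← hc0'eq]
      rw [Finset.erase_insert (by
        intro h
        rcases Finset.mem_insert.1 h with h | h
        · exact hne012 h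
        · exact hc01_not (Finset.mem_of_mem_erase h))]
      rw [Finset.erase_insert (fun h => hc02_not (Finset.mem_of_mem_erase h)),
        Finset.insert_erase hcpart]
  · -- WF
    have hoccn : ∀ w, w ∈ (insert (u₀ ++ [false]) (insert (u₀ ++ [true])
        ((T0.occs n₀).erase u₀))) ↔
        w = u₀ ++ [false] ∨ w = u₀ ++ [true] ∨ (w ≠ u₀ ∧ w ∈ T0.occs n₀) := by
      intro w; simp only [Finset.mem_insert, Finset.mem_erase]
    refine ⟨?_, ?_, ?_, ?_, ?_⟩
    · intro m hm w hw
      dsimp only at hw ⊢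
      by_cases hmn : m = n₀
      · subst hmn
        rw [if_pos rfl] at hw
        rcases (hoccn w).1 hw with rfl | rfl | ⟨_, hw'⟩
        · rw [MLLForm.subAt_tens_child hform₀ false]; rfl
        · rw [MLLForm.subAt_tens_child hform₀ true]; rfl
        · exact hWF0.subAt_isSome hm hw'
      · rw [if_neg hmn] at hw
        exact hWF0.subAt_isSome hm hw
    · intro m hm w hw w' hw' hne hpre
      dsimp only at hw hw'
      by_cases hmn : m = n₀
      · subst hmn
        rw [if_pos rfl] at hw hw'
        rcases (hoccn w).1 hw with rfl | rfl | ⟨hwu, hwO⟩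
        · rcases (hoccn w').1 hw' with rfl | rfl | ⟨hwu', hwO'⟩
          · exact hne rfl
          · have := hpre.eq_of_length (by simp)
            simp at this
          · exact hWF0.prefix_free hm hocc₀ hwO' (Ne.symm hwu')
              ((prefix_concat_self u₀ false).trans hpre)
        · rcases (hoccn w').1 hw' with rfl | rfl | ⟨hwu', hwO'⟩
          · have := hpre.eq_of_length (by simp)
            simp at this
          · exact hne rfl
          · exact hWF0.prefix_free hm hocc₀ hwO' (Ne.symm hwu')
              ((prefix_concat_self u₀ true).trans hpre)
        · rcases (hoccn w').1 hw' with rfl | rfl | ⟨hwu', hwO'⟩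
          · rcases prefix_concat_cases hpre with hp | rfl
            · exact hWF0.prefix_free hm hwO hocc₀ hwu hp
            · exact hnocc0f hwO
          · rcases prefix_concat_cases hpre with hp | rfl
            · exact hWF0.prefix_free hm hwO hocc₀ hwu hp
            · exact hnocc0t hwO
          · exact hWF0.prefix_free hm hwO hwO' hne hpre
      · rw [if_neg hmn] at hw hw'
        exact hWF0.prefix_free hm hw hw' hne hpre
    · intro d hd
      dsimp only at hd
      rcases Finset.mem_insert.1 hd with rfl | hd'
      · exact ⟨ch0f, hmem0f⟩
      rcases Finset.mem_insert.1 hd' with rfl | hd''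
      · exact ⟨ch0t, hmem0t⟩
      · exact hWF0.class_nonempty (Finset.mem_of_mem_erase hd'')
    · -- disjoint
      have key : ∀ y ∈ c1 ∪ c2, ∀ d ∈ T0.part.erase c0', g y ∈ d → False := by
        intro y hy d hd hxd
        have hdP : d ∈ T0.part := Finset.mem_of_mem_erase hd
        have hdne : d ≠ c0' := (Finset.mem_erase.1 hd).1
        by_cases hy1 : y = chf
        · subst hy1
          rw [hgu] at hxd
          exact hnocc0f ((hWF0.mem_class hdP hxd).2)
        · by_cases hy2 : y = cht
          · subst hy2
            rw [hgu] at hxd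
            exact hnocc0t ((hWF0.mem_class hdP hxd).2)
          · have hyc : y ∈ cc' := Finset.mem_insert_of_mem
              (Finset.mem_erase.2 ⟨hy2, Finset.mem_erase.2 ⟨hy1, hy⟩⟩)
            have : g y ∈ c0' := Finset.mem_image_of_mem g hyc
            exact (Finset.disjoint_left.1
              (hWF0.class_disjoint hcpart hdP (Ne.symm hdne))) this hxd
      have key1 : ∀ d ∈ T0.part.erase c0', Disjoint c01 d := by
        intro d hd
        rw [Finset.disjoint_left]
        intro x hx hxd
        obtain ⟨y, hy, rfl⟩ := Finset.mem_image.1 hx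
        exact key y (Finset.mem_union_left _ hy) d hd hxd
      have key2 : ∀ d ∈ T0.part.erase c0', Disjoint c02 d := by
        intro d hd
        rw [Finset.disjoint_left]
        intro x hx hxd
        obtain ⟨y, hy, rfl⟩ := Finset.mem_image.1 hx
        exact key y (Finset.mem_union_right _ hy) d hd hxd
      intro d hd d' hd' hne
      dsimp only at hd hd'
      rcases Finset.mem_insert.1 hd with rfl | hd2
      · rcases Finset.mem_insert.1 hd' with rfl | hd2'
        · exact absurd rfl hne
        rcases Finset.mem_insert.1 hd2' with rfl | hd3'
        · exact hdisj012
        · exact key1 d' hd3'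
      rcases Finset.mem_insert.1 hd2 with rfl | hd3
      · rcases Finset.mem_insert.1 hd' with rfl | hd2'
        · exact hdisj012.symm
        rcases Finset.mem_insert.1 hd2' with rfl | hd3'
        · exact absurd rfl hne
        · exact key2 d' hd3'
      · rcases Finset.mem_insert.1 hd' with rfl | hd2'
        · exact (key1 d hd3).symm
        rcases Finset.mem_insert.1 hd2' with rfl | hd3'
        · exact (key2 d hd3).symm
        · exact hWF0.class_disjoint (Finset.mem_of_mem_erase hd3)
            (Finset.mem_of_mem_erase hd3') hne
    · -- biUnion = leaves
      ext x
      dsimp only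
      rw [Finset.biUnion_insert, Finset.mem_union, Finset.biUnion_insert, Finset.mem_union,
        mem_biUnion_erase hWF0.2.2.2.1 hcpart, hWF0.biUnion_eq]
      have hchar : x ∈ PPS.leaves ⟨T0.names, T0.form,
          fun m => if m = n₀ then insert (u₀ ++ [false]) (insert (u₀ ++ [true])
            ((T0.occs n₀).erase u₀)) else T0.occs m,
          insert c01 (insert c02 (T0.part.erase c0'))⟩ ↔
          x = ch0f ∨ x = ch0t ∨ (x ∈ T0.leaves ∧ x ≠ (n₀, u₀)) := by
        obtain ⟨m, w⟩ := x
        rw [PPS.mem_leaves, PPS.mem_leaves]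
        dsimp only
        by_cases hmn : m = n₀
        · subst hmn
          rw [if_pos rfl]
          simp only [hoccn, hch0f, hch0t, ne_eq, Prod.mk.injEq, eq_self_iff_true, true_and]
          tauto
        · rw [if_neg hmn]
          simp only [hch0f, hch0t, ne_eq, Prod.mk.injEq]
          tauto
      rw [hchar]
      have hA : ∀ y ∈ c1 ∪ c2, g y = ch0f ∨ g y = ch0t ∨ (g y ∈ c0' ∧ g y ≠ (n₀, u₀)) := by
        intro y hy
        by_cases e1 : y = chf
        · subst e1; rw [hgu]; exact Or.inl rfl
        by_cases e2 : y = cht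
        · subst e2; rw [hgu]; exact Or.inr (Or.inl rfl)
        have hyc : y ∈ cc' := Finset.mem_insert_of_mem
          (Finset.mem_erase.2 ⟨e2, Finset.mem_erase.2 ⟨e1, hy⟩⟩)
        refine Or.inr (Or.inr ⟨Finset.mem_image_of_mem g hyc, fun e => ?_⟩)
        have : y = (n, u) := by rw [← hfgc y hy, e, hfu]
        exact hnuc (this ▸ hy)
      have hB : x ∈ c0' → x ∈ T0.leaves := fun h => hWF0.class_subset_leaves hcpart h
      have hC : x ∈ c0' → x ≠ (n₀, u₀) → x ∈ c01 ∨ x ∈ c02 := by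
        intro hx hne
        rw [hc0'eq] at hx
        rcases Finset.mem_insert.1 hx with rfl | hx'
        · exact absurd rfl hne
        · exact Finset.mem_union.1 (Finset.mem_of_mem_erase (Finset.mem_of_mem_erase hx'))
      constructor
      · rintro (hx | hx | ⟨hl, hnc⟩)
        · obtain ⟨y, hy, rfl⟩ := Finset.mem_image.1 hx
          rcases hA y (Finset.mem_union_left _ hy) with e | e | ⟨h1, h2⟩
          · exact Or.inl e
          · exact Or.inr (Or.inl e)
          · exact Or.inr (Or.inr ⟨hB h1, h2⟩)
        · obtain ⟨y, hy, rfl⟩ := Finset.mem_image.1 hx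
          rcases hA y (Finset.mem_union_right _ hy) with e | e | ⟨h1, h2⟩
          · exact Or.inl e
          · exact Or.inr (Or.inl e)
          · exact Or.inr (Or.inr ⟨hB h1, h2⟩)
        · exact Or.inr (Or.inr ⟨hl, fun e => hnc (e ▸ hnu0c0')⟩)
      · rintro (e | e | ⟨hl, hne⟩)
        · exact Or.inl (e ▸ hmem0f)
        · exact Or.inr (Or.inl (e ▸ hmem0t))
        · by_cases hx : x ∈ c0'
          · rcases hC hx hne with h | h
            · exact Or.inl h
            · exact Or.inr (Or.inl h)
          · exact Or.inr (Or.inr ⟨hl, hx⟩)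
  · -- partition image
    show (insert c01 (insert c02 (T0.part.erase c0'))).image (Finset.image f) = _
    rw [Finset.image_insert, Finset.image_insert, hfc01, hfc02,
      image_erase_of_injOn hinjF hcpart, hfc0']

end Aux7

section Aux8
open Finset

lemma fresh2 (N : Finset ℕ) : ∃ nB nC, nB ∉ N ∧ nC ∉ N ∧ nB ≠ nC := by
  refine ⟨N.sup id + 1, N.sup id + 2, ?_, ?_, by omega⟩ <;>
    · intro h
      have := Finset.le_sup (f := id) h
      simp only [id] at this
      omega

def axS (N : Finset ℕ) (F : ℕ → MLLForm) : PPS :=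
  ⟨N, F, fun _ => {[]},
    {N.biUnion fun m => ({([] : List Bool)} : Finset (List Bool)).image fun v => (m, v)}⟩

lemma axS_mem_leaves (N : Finset ℕ) (F : ℕ → MLLForm) (x : Leaf) :
    x ∈ (axS N F).leaves ↔ x.1 ∈ N ∧ x.2 = [] := by
  rw [PPS.mem_leaves]
  exact and_congr_right (fun _ => Finset.mem_singleton)

lemma axS_part_eq (N : Finset ℕ) (F : ℕ → MLLForm) :
    (axS N F).part = {(axS N F).leaves} := rfl

lemma axS_seqnetW (N : Finset ℕ) (F : ℕ → MLLForm) (hN : N.Nonempty) :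
    SeqNetW (axS N F) := by
  obtain ⟨n0, hn0⟩ := hN
  refine SeqNetW.ax _ (fun _ _ => rfl) rfl ⟨?_, ?_, ?_, ?_, ?_⟩
  · intro m _ w hw
    rw [Finset.mem_singleton.1 hw, MLLForm.subAt_nil]
    rfl
  · intro m _ w hw w' hw' hne
    rw [Finset.mem_singleton.1 hw, Finset.mem_singleton.1 hw'] at hne
    exact absurd rfl hne
  · intro d hd
    rw [Finset.mem_singleton.1 hd]
    exact ⟨(n0, []), (axS_mem_leaves N F _).2 ⟨hn0, rfl⟩⟩
  · intro d hd d' hd' hne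
    rw [Finset.mem_singleton.1 hd, Finset.mem_singleton.1 hd'] at hne
    exact absurd rfl hne
  · show ({(axS N F).leaves} : Finset _).biUnion id = (axS N F).leaves
    simp

set_option maxHeartbeats 1000000 in
lemma deparse_ax {S T : PPS} (hWF : S.WF)
    (ha1 : ∀ m ∈ T.names, T.occs m = {([] : List Bool)})
    (ha2 : T.part = {T.leaves}) (hst : Parse S T) : SeqNetW S := by
  classical
  cases hst with
  | parr n u a b c hn hf h0 h1 hc hc0 hc1 pnames pforms poccs poccso ppart =>
    have hnT : n ∈ T.names := pnames ▸ hn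
    have hu : u = [] := by
      have huT : u ∈ T.occs n := poccs ▸ Finset.mem_insert_self _ _
      rw [ha1 n hnT] at huT
      exact Finset.mem_singleton.1 huT
    subst hu
    simp only [List.nil_append] at hf h0 h1 hc0 hc1 poccs ppart
    have h00 : ([] : List Bool) ∉ S.occs n := hWF.parent_not_occ hn h0
    have hoccm : ∀ m ∈ S.names, m ≠ n → S.occs m = {([] : List Bool)} := by
      intro m hm hmn
      rw [← poccso m hm hmn, ha1 m (pnames ▸ hm)]
    have hSocc : S.occs n = {[false], [true]} := by
      ext w
      simp only [Finset.mem_insert, Finset.mem_singleton]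
      constructor
      · intro hw
        by_cases e1 : w = [false]
        · exact Or.inl e1
        by_cases e2 : w = [true]
        · exact Or.inr e2
        exfalso
        have hwT : w ∈ T.occs n := poccs ▸ Finset.mem_insert_of_mem
          (Finset.mem_erase.2 ⟨e2, Finset.mem_erase.2 ⟨e1, hw⟩⟩)
        rw [ha1 n hnT] at hwT
        exact h00 (Finset.mem_singleton.1 hwT ▸ hw)
      · rintro (rfl | rfl)
        · exact h0
        · exact h1
    have hcm : insert (n, ([] : List Bool)) ((c.erase (n, [false])).erase (n, [true])) ∈
        T.part := ppart ▸ Finset.mem_insert_self _ _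
    have hc'notS : insert (n, ([] : List Bool))
        ((c.erase (n, [false])).erase (n, [true])) ∉ S.part := fun hmem =>
      h00 ((hWF.mem_class hmem (Finset.mem_insert_self _ _)).2)
    have hSpart : S.part = {c} := by
      have hinv := part_invert1 ppart hc hc'notS
      rw [ha2] at hcm
      rw [hinv, ha2, ← Finset.mem_singleton.1 hcm, Finset.erase_singleton]
      rfl
    have hcL : c = S.leaves := by
      have := hWF.biUnion_eq
      rw [hSpart] at this
      simpa using this
    have hfab : S.form n = .parr a b := by
      rw [MLLForm.subAt_nil] at hf
      exact Option.some.inj hf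
    obtain ⟨nB, nC, hnB, hnC, hBC⟩ := fresh2 S.names
    have hnnB : n ≠ nB := fun e => hnB (e ▸ hn)
    have hnnC : n ≠ nC := fun e => hnC (e ▸ hn)
    set N1 : Finset ℕ := insert nB (insert nC (S.names.erase n)) with hN1
    set F1 : ℕ → MLLForm := fun m => if m = nB then a else if m = nC then b else S.form m
      with hF1
    have hax := axS_seqnetW N1 F1 ⟨nB, Finset.mem_insert_self _ _⟩
    have hmemN1 : ∀ m, m ∈ N1 ↔ m = nB ∨ m = nC ∨ (m ≠ n ∧ m ∈ S.names) := by
      intro m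
      simp only [hN1, Finset.mem_insert, Finset.mem_erase]
    refine SeqNetW.parr (axS N1 F1) S nB nC n hax (Finset.mem_insert_self _ _)
      (Finset.mem_insert_of_mem (Finset.mem_insert_self _ _)) hBC ?_ ?_ ?_ ?_ ?_ ?_ ?_ hWF
    · -- fresh
      show n ∉ N1
      rw [hmemN1]
      push_neg
      exact ⟨hnnB, hnnC, fun h => absurd rfl h⟩
    · -- names
      show S.names = insert n (N1 \ {nB, nC})
      have : N1 \ {nB, nC} = S.names.erase n := by
        ext m
        rw [Finset.mem_sdiff, hmemN1, Finset.mem_erase]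
        simp only [Finset.mem_insert, Finset.mem_singleton]
        constructor
        · rintro ⟨(rfl | rfl | ⟨hmn, hmS⟩), hno⟩
          · exact absurd (Or.inl rfl) hno
          · exact absurd (Or.inr rfl) hno
          · exact ⟨hmn, hmS⟩
        · rintro ⟨hmn, hmS⟩
          refine ⟨Or.inr (Or.inr ⟨hmn, hmS⟩), ?_⟩
          rintro (rfl | rfl)
          · exact hnB hmS
          · exact hnC hmS
      rw [this, Finset.insert_erase hn]
    · -- form
      show S.form n = MLLForm.parr (F1 nB) (F1 nC)
      rw [hfab, hF1]
      simp [Ne.symm hBC]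
    · -- formo
      intro m hm
      replace hm : m ∈ N1 \ {nB, nC} := hm
      rw [Finset.mem_sdiff, hmemN1] at hm
      obtain ⟨hm1, hm2⟩ := hm
      simp only [Finset.mem_insert, Finset.mem_singleton] at hm2
      push_neg at hm2
      show S.form m = F1 m
      rw [hF1]
      simp [hm2.1, hm2.2]
    · -- occs
      show S.occs n = Finset.image _ ({[]} : Finset (List Bool)) ∪
        Finset.image _ ({[]} : Finset (List Bool))
      rw [hSocc, Finset.image_singleton, Finset.image_singleton, ← Finset.insert_eq]
    · -- occso
      intro m hm
      replace hm : m ∈ N1 \ {nB, nC} := hm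
      rw [Finset.mem_sdiff, hmemN1] at hm
      obtain ⟨hm1, hm2⟩ := hm
      simp only [Finset.mem_insert, Finset.mem_singleton] at hm2
      push_neg at hm2
      rcases hm1 with rfl | rfl | ⟨hmn, hmS⟩
      · exact absurd rfl hm2.1
      · exact absurd rfl hm2.2
      · show S.occs m = {[]}
        exact hoccm m hmS hmn
    · -- part
      rw [axS_part_eq, Finset.image_singleton, hSpart]
      congr 1
      rw [hcL]
      symm
      ext x
      rw [Finset.mem_image]
      constructor
      · rintro ⟨y, hy, rfl⟩
        have hy' := (axS_mem_leaves N1 F1 y).1 hy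
        obtain ⟨m0, w0⟩ := y
        simp only at hy'
        obtain ⟨hm0, rfl⟩ := hy'
        rw [hmemN1] at hm0
        rcases hm0 with rfl | rfl | ⟨hm0n, hm0S⟩
        · rw [parF_eval_B hBC]
          exact PPS.mem_leaves.2 ⟨hn, by rw [hSocc]; simp⟩
        · rw [parF_eval_C hnnB]
          exact PPS.mem_leaves.2 ⟨hn, by rw [hSocc]; simp⟩
        · rw [parF_eval_O (fun e => hnB (e ▸ hm0S) : m0 ≠ nB)
            (fun e => hnC (e ▸ hm0S) : m0 ≠ nC)]
          exact PPS.mem_leaves.2 ⟨hm0S, by rw [hoccm m0 hm0S hm0n]; simp⟩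
      · intro hx
        obtain ⟨m, w⟩ := x
        have hx' := PPS.mem_leaves.1 hx
        simp only at hx'
        obtain ⟨hmS, hw⟩ := hx'
        by_cases hmn : m = n
        · subst hmn
          rw [hSocc] at hw
          simp only [Finset.mem_insert, Finset.mem_singleton] at hw
          rcases hw with rfl | rfl
          · refine ⟨(nB, []), (axS_mem_leaves N1 F1 _).2 ⟨Finset.mem_insert_self _ _, rfl⟩, ?_⟩
            rw [parF_eval_B hBC]
          · refine ⟨(nC, []), (axS_mem_leaves N1 F1 _).2
              ⟨Finset.mem_insert_of_mem (Finset.mem_insert_self _ _), rfl⟩, ?_⟩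
            rw [parF_eval_C hnnB]
        · rw [hoccm m hmS hmn] at hw
          rw [Finset.mem_singleton.1 hw]
          refine ⟨(m, []), (axS_mem_leaves N1 F1 _).2 ⟨?_, rfl⟩, ?_⟩
          · rw [hmemN1]; exact Or.inr (Or.inr ⟨hmn, hmS⟩)
          · rw [parF_eval_O (fun e => hnB (e ▸ hmS) : m ≠ nB)
              (fun e => hnC (e ▸ hmS) : m ≠ nC)]
  | tens n u a b c1 c2 hn hf h0 h1 hc1 hc2 hne12 hm0 hm1 pnames pforms poccs poccso ppart =>
    have hnT : n ∈ T.names := pnames ▸ hn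
    have hu : u = [] := by
      have huT : u ∈ T.occs n := poccs ▸ Finset.mem_insert_self _ _
      rw [ha1 n hnT] at huT
      exact Finset.mem_singleton.1 huT
    subst hu
    simp only [List.nil_append] at hf h0 h1 hm0 hm1 poccs ppart
    have h00 : ([] : List Bool) ∉ S.occs n := hWF.parent_not_occ hn h0
    have hoccm : ∀ m ∈ S.names, m ≠ n → S.occs m = {([] : List Bool)} := by
      intro m hm hmn
      rw [← poccso m hm hmn, ha1 m (pnames ▸ hm)]
    have hSocc : S.occs n = {[false], [true]} := by
      ext w
      simp only [Finset.mem_insert, Finset.mem_singleton]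
      constructor
      · intro hw
        by_cases e1 : w = [false]
        · exact Or.inl e1
        by_cases e2 : w = [true]
        · exact Or.inr e2
        exfalso
        have hwT : w ∈ T.occs n := poccs ▸ Finset.mem_insert_of_mem
          (Finset.mem_erase.2 ⟨e2, Finset.mem_erase.2 ⟨e1, hw⟩⟩)
        rw [ha1 n hnT] at hwT
        exact h00 (Finset.mem_singleton.1 hwT ▸ hw)
      · rintro (rfl | rfl)
        · exact h0
        · exact h1
    have hcm : insert (n, ([] : List Bool)) (((c1 ∪ c2).erase (n, [false])).erase (n, [true]))
        ∈ T.part := ppart ▸ Finset.mem_insert_self _ _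
    have hc'notS : insert (n, ([] : List Bool))
        (((c1 ∪ c2).erase (n, [false])).erase (n, [true])) ∉ S.part := fun hmem =>
      h00 ((hWF.mem_class hmem (Finset.mem_insert_self _ _)).2)
    have hSpart : S.part = {c1, c2} := by
      have hinv := part_invert2 ppart hc1 hc2 hc'notS
      rw [ha2] at hcm
      rw [hinv, ha2, ← Finset.mem_singleton.1 hcm, Finset.erase_singleton]
      rfl
    have hdisj12 : Disjoint c1 c2 := hWF.class_disjoint hc1 hc2 hne12
    have hLU : S.leaves = c1 ∪ c2 := by
      have := hWF.biUnion_eq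
      rw [hSpart] at this
      rw [← this]
      simp
    have hc1elem : ∀ x ∈ c1, x = (n, [false]) ∨ (x.1 ≠ n ∧ x.1 ∈ S.names ∧ x.2 = []) := by
      intro x hx
      have hxl : x ∈ S.leaves := hLU ▸ Finset.mem_union_left _ hx
      obtain ⟨m, w⟩ := x
      have hx' := PPS.mem_leaves.1 hxl
      simp only at hx' ⊢
      obtain ⟨hmS, hw⟩ := hx'
      by_cases hmn : m = n
      · subst hmn
        rw [hSocc] at hw
        simp only [Finset.mem_insert, Finset.mem_singleton] at hw
        rcases hw with rfl | rfl
        · exact Or.inl rfl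
        · exact absurd hm1 (fun h => (Finset.disjoint_left.1 hdisj12) hx h)
      · rw [hoccm m hmS hmn] at hw
        exact Or.inr ⟨hmn, hmS, Finset.mem_singleton.1 hw⟩
    have hc2elem : ∀ x ∈ c2, x = (n, [true]) ∨ (x.1 ≠ n ∧ x.1 ∈ S.names ∧ x.2 = []) := by
      intro x hx
      have hxl : x ∈ S.leaves := hLU ▸ Finset.mem_union_right _ hx
      obtain ⟨m, w⟩ := x
      have hx' := PPS.mem_leaves.1 hxl
      simp only at hx' ⊢
      obtain ⟨hmS, hw⟩ := hx'
      by_cases hmn : m = n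
      · subst hmn
        rw [hSocc] at hw
        simp only [Finset.mem_insert, Finset.mem_singleton] at hw
        rcases hw with rfl | rfl
        · exact absurd hm0 (fun h => (Finset.disjoint_left.1 hdisj12) h hx)
        · exact Or.inl rfl
      · rw [hoccm m hmS hmn] at hw
        exact Or.inr ⟨hmn, hmS, Finset.mem_singleton.1 hw⟩
    have hfab : S.form n = .tens a b := by
      rw [MLLForm.subAt_nil] at hf
      exact Option.some.inj hf
    obtain ⟨nB, nC, hnB, hnC, hBC⟩ := fresh2 S.names
    have hnnB : n ≠ nB := fun e => hnB (e ▸ hn)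
    have hnnC : n ≠ nC := fun e => hnC (e ▸ hn)
    set M1 : Finset ℕ := (S.names.erase n).filter (fun m => (m, ([] : List Bool)) ∈ c1)
      with hM1
    set M2 : Finset ℕ := (S.names.erase n).filter (fun m => (m, ([] : List Bool)) ∈ c2)
      with hM2
    have hM1sub : M1 ⊆ S.names.erase n := Finset.filter_subset _ _
    have hM2sub : M2 ⊆ S.names.erase n := Finset.filter_subset _ _
    have hMcover : ∀ m ∈ S.names.erase n, m ∈ M1 ∨ m ∈ M2 := by
      intro m hm
      have hml : (m, ([] : List Bool)) ∈ S.leaves := by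
        refine PPS.mem_leaves.2 ⟨Finset.mem_of_mem_erase hm, ?_⟩
        rw [hoccm m (Finset.mem_of_mem_erase hm) (Finset.mem_erase.1 hm).1]
        simp
      rw [hLU] at hml
      rcases Finset.mem_union.1 hml with h | h
      · exact Or.inl (Finset.mem_filter.2 ⟨hm, h⟩)
      · exact Or.inr (Finset.mem_filter.2 ⟨hm, h⟩)
    set F1 : ℕ → MLLForm := fun m => if m = nB then a else S.form m with hF1
    set F2 : ℕ → MLLForm := fun m => if m = nC then b else S.form m with hF2
    have hax1 := axS_seqnetW (insert nB M1) F1 ⟨nB, Finset.mem_insert_self _ _⟩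
    have hax2 := axS_seqnetW (insert nC M2) F2 ⟨nC, Finset.mem_insert_self _ _⟩
    have hnBM1 : nB ∉ M1 := fun h => hnB (Finset.mem_of_mem_erase (hM1sub h))
    have hnCM2 : nC ∉ M2 := fun h => hnC (Finset.mem_of_mem_erase (hM2sub h))
    refine SeqNetW.tens (axS (insert nB M1) F1) (axS (insert nC M2) F2) S nB nC n
      hax1 hax2 ?_ (Finset.mem_insert_self _ _) (Finset.mem_insert_self _ _)
      ?_ ?_ ?_ ?_ ?_ ?_ ?_ ?_ ?_ hWF
    · -- disjoint names
      show Disjoint (insert nB M1) (insert nC M2)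
      rw [Finset.disjoint_left]
      intro m hm hm'
      rcases Finset.mem_insert.1 hm with rfl | hmm
      · rcases Finset.mem_insert.1 hm' with e | hmm'
        · exact hBC e
        · exact hnB (Finset.mem_of_mem_erase (hM2sub hmm'))
      · rcases Finset.mem_insert.1 hm' with e | hmm'
        · exact hnC (e ▸ Finset.mem_of_mem_erase (hM1sub hmm))
        · exact (Finset.disjoint_left.1 hdisj12)
            (Finset.mem_filter.1 hmm).2 (Finset.mem_filter.1 hmm').2
    · -- fresh
      show n ∉ insert nB M1 ∪ insert nC M2
      intro h
      rcases Finset.mem_union.1 h with h | h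
      · rcases Finset.mem_insert.1 h with e | h
        · exact hnnB e
        · exact (Finset.mem_erase.1 (hM1sub h)).1 rfl
      · rcases Finset.mem_insert.1 h with e | h
        · exact hnnC e
        · exact (Finset.mem_erase.1 (hM2sub h)).1 rfl
    · -- names
      show S.names = insert n (((insert nB M1).erase nB) ∪ ((insert nC M2).erase nC))
      rw [Finset.erase_insert hnBM1, Finset.erase_insert hnCM2]
      have : M1 ∪ M2 = S.names.erase n := by
        apply Finset.Subset.antisymm
        · intro m hm
          rcases Finset.mem_union.1 hm with h | h
          · exact hM1sub h
          · exact hM2sub h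
        · intro m hm
          exact Finset.mem_union.2 (hMcover m hm)
      rw [this, Finset.insert_erase hn]
    · -- form
      show S.form n = MLLForm.tens (F1 nB) (F2 nC)
      rw [hfab, hF1, hF2]
      simp
    · -- form1
      intro m hm
      replace hm : m ∈ (insert nB M1).erase nB := hm
      rw [Finset.erase_insert hnBM1] at hm
      show S.form m = F1 m
      rw [hF1]
      have : m ≠ nB := fun e => hnB (e ▸ Finset.mem_of_mem_erase (hM1sub hm))
      simp [this]
    · -- form2
      intro m hm
      replace hm : m ∈ (insert nC M2).erase nC := hm
      rw [Finset.erase_insert hnCM2] at hm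
      show S.form m = F2 m
      rw [hF2]
      have : m ≠ nC := fun e => hnC (e ▸ Finset.mem_of_mem_erase (hM2sub hm))
      simp [this]
    · -- occs
      show S.occs n = Finset.image _ ({[]} : Finset (List Bool)) ∪
        Finset.image _ ({[]} : Finset (List Bool))
      rw [hSocc, Finset.image_singleton, Finset.image_singleton, ← Finset.insert_eq]
    · -- occs1
      intro m hm
      replace hm : m ∈ (insert nB M1).erase nB := hm
      rw [Finset.erase_insert hnBM1] at hm
      show S.occs m = {[]}
      exact hoccm m (Finset.mem_of_mem_erase (hM1sub hm))
        (Finset.mem_erase.1 (hM1sub hm)).1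
    · -- occs2
      intro m hm
      replace hm : m ∈ (insert nC M2).erase nC := hm
      rw [Finset.erase_insert hnCM2] at hm
      show S.occs m = {[]}
      exact hoccm m (Finset.mem_of_mem_erase (hM2sub hm))
        (Finset.mem_erase.1 (hM2sub hm)).1
    · -- part
      rw [axS_part_eq, axS_part_eq, Finset.image_singleton, Finset.image_singleton, hSpart]
      have e1 : Finset.image (relab1 nB n false) (axS (insert nB M1) F1).leaves = c1 := by
        ext x
        rw [Finset.mem_image]
        constructor
        · rintro ⟨y, hy, rfl⟩
          have hy' := (axS_mem_leaves _ F1 y).1 hy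
          obtain ⟨m0, w0⟩ := y
          simp only at hy'
          obtain ⟨hym, rfl⟩ := hy'
          rcases Finset.mem_insert.1 hym with rfl | hm0'
          · rw [relab1_eq]
            exact hm0
          · rw [relab1_ne _ _ _ (by simpa using
              (fun e => hnB (e ▸ Finset.mem_of_mem_erase (hM1sub hm0')) : m0 ≠ nB))]
            exact (Finset.mem_filter.1 hm0').2
        · intro hx
          rcases hc1elem x hx with rfl | ⟨hxn, hxS, hxe⟩
          · refine ⟨(nB, []), (axS_mem_leaves _ F1 _).2 ⟨Finset.mem_insert_self _ _, rfl⟩, ?_⟩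
            rw [relab1_eq]
          · obtain ⟨m0, w0⟩ := x
            simp only at hxn hxS hxe
            subst hxe
            refine ⟨(m0, []), (axS_mem_leaves _ F1 _).2 ⟨?_, rfl⟩, ?_⟩
            · exact Finset.mem_insert_of_mem (Finset.mem_filter.2
                ⟨Finset.mem_erase.2 ⟨hxn, hxS⟩, hx⟩)
            · exact relab1_ne _ _ _ (by simpa using (fun e => hnB (e ▸ hxS) : m0 ≠ nB))
      have e2 : Finset.image (relab1 nC n true) (axS (insert nC M2) F2).leaves = c2 := by
        ext x
        rw [Finset.mem_image]
        constructor
        · rintro ⟨y, hy, rfl⟩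
          have hy' := (axS_mem_leaves _ F2 y).1 hy
          obtain ⟨m0, w0⟩ := y
          simp only at hy'
          obtain ⟨hym, rfl⟩ := hy'
          rcases Finset.mem_insert.1 hym with rfl | hm0'
          · rw [relab1_eq]
            exact hm1
          · rw [relab1_ne _ _ _ (by simpa using
              (fun e => hnC (e ▸ Finset.mem_of_mem_erase (hM2sub hm0')) : m0 ≠ nC))]
            exact (Finset.mem_filter.1 hm0').2
        · intro hx
          rcases hc2elem x hx with rfl | ⟨hxn, hxS, hxe⟩
          · refine ⟨(nC, []), (axS_mem_leaves _ F2 _).2 ⟨Finset.mem_insert_self _ _, rfl⟩, ?_⟩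
            rw [relab1_eq]
          · obtain ⟨m0, w0⟩ := x
            simp only at hxn hxS hxe
            subst hxe
            refine ⟨(m0, []), (axS_mem_leaves _ F2 _).2 ⟨?_, rfl⟩, ?_⟩
            · exact Finset.mem_insert_of_mem (Finset.mem_filter.2
                ⟨Finset.mem_erase.2 ⟨hxn, hxS⟩, hx⟩)
            · exact relab1_ne _ _ _ (by simpa using (fun e => hnC (e ▸ hxS) : m0 ≠ nC))
      rw [e1, e2, ← Finset.insert_eq]

end Aux8

section Aux9
open Finset

set_option maxHeartbeats 2000000 in
lemma deparse {T : PPS} (hT : SeqNetW T) : ∀ S : PPS, Parse S T → S.WF → SeqNetW S := by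
  induction hT with
  | ax T h1 h2 hWFT => exact fun S hst hWF => deparse_ax hWF h1 h2 hst
  | parr T0 T nB nC n' hSeq hnB hnC hBC hfresh hnames hform hformo hoccs hoccso hpart hWFT ih =>
    intro S hst hWF
    have hWF0 : T0.WF := hSeq.wf
    have hBn' : n' ≠ nB := fun e => hfresh (e ▸ hnB)
    have hCn' : n' ≠ nC := fun e => hfresh (e ▸ hnC)
    have hgf : ∀ x : Leaf, x.1 ∈ T0.names →
        parG nB nC n' ((fun x => relab1 nB n' false (relab1 nC n' true x)) x) = x :=
      fun x hx => parG_gf hBC hBn' hCn' x (fun e => hfresh (e ▸ hx))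
    have hnBS : nB ∉ S.names := by
      intro hmem
      cases hst with
      | parr _ _ _ _ _ pn pf p0 p1 pc pc0 pc1 pnames _ _ _ _ =>
        rw [← pnames, hnames] at hmem
        rcases Finset.mem_insert.1 hmem with e | e
        · exact hBn' e.symm
        · simp at e
      | tens _ _ _ _ _ _ pn pf p0 p1 pc1 pc2 pne pm0 pm1 pnames _ _ _ _ =>
        rw [← pnames, hnames] at hmem
        rcases Finset.mem_insert.1 hmem with e | e
        · exact hBn' e.symm
        · simp at e
    have hnCS : nC ∉ S.names := by
      intro hmem
      cases hst with
      | parr _ _ _ _ _ pn pf p0 p1 pc pc0 pc1 pnames _ _ _ _ =>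
        rw [← pnames, hnames] at hmem
        rcases Finset.mem_insert.1 hmem with e | e
        · exact hCn' e.symm
        · simp at e
      | tens _ _ _ _ _ _ pn pf p0 p1 pc1 pc2 pne pm0 pm1 pnames _ _ _ _ =>
        rw [← pnames, hnames] at hmem
        rcases Finset.mem_insert.1 hmem with e | e
        · exact hCn' e.symm
        · simp at e
    have hfgS : ∀ x ∈ S.leaves, (fun x => relab1 nB n' false (relab1 nC n' true x))
        (parG nB nC n' x) = x := by
      intro x hx
      exact parG_fg hBC hBn' hCn' x
        (fun e => hnBS (e ▸ (PPS.mem_leaves.1 hx).1))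
        (fun e => hnCS (e ▸ (PPS.mem_leaves.1 hx).1))
    cases hst with
    | parr n u a b c phn phf ph0 ph1 phc phc0 phc1 pnames pforms poccs poccso ppart =>
      have hnuS : u ∉ S.occs n := hWF.parent_not_occ phn ph0
      have hSocc_n : S.occs n =
          insert (u ++ [false]) (insert (u ++ [true]) ((T.occs n).erase u)) :=
        surgery_invert poccs ph0 ph1 hnuS (by simp)
      have hcsub : c ⊆ S.leaves := hWF.class_subset_leaves phc
      have hnuc : (n, u) ∉ c := fun h => hnuS (hWF.mem_class phc h).2
      have hfgc : ∀ x ∈ c, (fun x => relab1 nB n' false (relab1 nC n' true x))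
          (parG nB nC n' x) = x := fun x hx => hfgS x (hcsub hx)
      have hc'T : insert (n, u) ((c.erase (n, u ++ [false])).erase (n, u ++ [true]))
          ∈ T.part := ppart ▸ Finset.mem_insert_self _ _
      have hcpart : (insert (n, u) ((c.erase (n, u ++ [false])).erase
          (n, u ++ [true]))).image (parG nB nC n') ∈ T0.part := by
        rw [hpart] at hc'T
        obtain ⟨d, hd, hde⟩ := Finset.mem_image.1 hc'T
        rw [← hde, image_image_id (fun x hx => hgf x ((hWF0.mem_class hd hx).1))]
        exact hd
      have hc'notS : insert (n, u) ((c.erase (n, u ++ [false])).erase (n, u ++ [true]))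
          ∉ S.part := fun h => hnuS ((hWF.mem_class h (Finset.mem_insert_self _ _)).2)
      have hSpart : S.part = insert c (T.part.erase (insert (n, u)
          ((c.erase (n, u ++ [false])).erase (n, u ++ [true])))) :=
        part_invert1 ppart phc hc'notS
      have hn'S : n' ∈ S.names := by
        rw [← pnames, hnames]; exact Finset.mem_insert_self _ _
      obtain ⟨n₀, u₀, hfu, hgu, hgu0, hn₀, hform₀, hocc₀, hOcc1, hOcc2⟩ :
          ∃ n₀ u₀,
            (fun x => relab1 nB n' false (relab1 nC n' true x)) (n₀, u₀) = (n, u) ∧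
            (∀ b' : Bool, parG nB nC n' (n, u ++ [b']) = (n₀, u₀ ++ [b'])) ∧
            parG nB nC n' (n, u) = (n₀, u₀) ∧
            n₀ ∈ T0.names ∧ (T0.form n₀).subAt u₀ = some (.parr a b) ∧
            u₀ ∈ T0.occs n₀ ∧
            (∀ O : ℕ → Finset (List Bool), (∀ m, m ≠ n₀ → O m = T0.occs m) →
              O n₀ = insert (u₀ ++ [false]) (insert (u₀ ++ [true]) ((T0.occs n₀).erase u₀)) →
              S.occs n' = (O nB).image (fun v => false :: v) ∪
                (O nC).image (fun v => true :: v)) ∧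
            (∀ O : ℕ → Finset (List Bool), (∀ m, m ≠ n₀ → O m = T0.occs m) →
              O n₀ = insert (u₀ ++ [false]) (insert (u₀ ++ [true]) ((T0.occs n₀).erase u₀)) →
              ∀ m ∈ T0.names \ ({nB, nC} : Finset ℕ), S.occs m = O m) := by
        by_cases hn' : n = n'
        · subst hn'
          have huT : u ∈ T.occs n := poccs ▸ Finset.mem_insert_self _ _
          rw [hoccs] at huT
          rcases Finset.mem_union.1 huT with hu | hu
          · obtain ⟨u', hu', rfl⟩ := Finset.mem_image.1 hu
            refine ⟨nB, u', parF_eval_B hBC u', ?_, by simp [parG], hnB, ?_, hu', ?_, ?_⟩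
            · intro b'
              show parG nB nC n (n, false :: (u' ++ [b'])) = _
              simp [parG]
            · have := phf
              rw [← pforms n phn, hform] at this
              simpa [MLLForm.subAt] using this
            · intro O hOo hOn
              rw [hSocc_n, hoccs, hOn, hOo nC (Ne.symm hBC)]
              exact occ_comp_left
            · intro O hOo hOn m hm
              have hm' := Finset.mem_sdiff.1 hm
              have hmB : m ≠ nB := by
                intro e; apply hm'.2; simp [e]
              have hmC : m ≠ nC := by
                intro e; apply hm'.2; simp [e]
              have hmn : m ≠ n := fun e => hfresh (e ▸ hm'.1)
              have hmS : m ∈ S.names := by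
                rw [← pnames, hnames]
                exact Finset.mem_insert_of_mem hm
              rw [← poccso m hmS hmn, hoccso m hm, ← hOo m hmB]
          · obtain ⟨u', hu', rfl⟩ := Finset.mem_image.1 hu
            refine ⟨nC, u', parF_eval_C hBn' u', ?_, by simp [parG], hnC, ?_, hu', ?_, ?_⟩
            · intro b'
              show parG nB nC n (n, true :: (u' ++ [b'])) = _
              simp [parG]
            · have := phf
              rw [← pforms n phn, hform] at this
              simpa [MLLForm.subAt] using this
            · intro O hOo hOn
              rw [hSocc_n, hoccs, hOn, hOo nB hBC]
              exact occ_comp_right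
            · intro O hOo hOn m hm
              have hm' := Finset.mem_sdiff.1 hm
              have hmB : m ≠ nB := by
                intro e; apply hm'.2; simp [e]
              have hmC : m ≠ nC := by
                intro e; apply hm'.2; simp [e]
              have hmn : m ≠ n := fun e => hfresh (e ▸ hm'.1)
              have hmS : m ∈ S.names := by
                rw [← pnames, hnames]
                exact Finset.mem_insert_of_mem hm
              rw [← poccso m hmS hmn, hoccso m hm, ← hOo m hmC]
        · have hnB' : n ≠ nB := fun e => hnBS (e ▸ phn)
          have hnC' : n ≠ nC := fun e => hnCS (e ▸ phn)
          have hnT0 : n ∈ T0.names \ ({nB, nC} : Finset ℕ) := by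
            have : n ∈ T.names := pnames ▸ phn
            rw [hnames] at this
            rcases Finset.mem_insert.1 this with e | e
            · exact absurd e hn'
            · exact e
          refine ⟨n, u, parF_eval_O hnB' hnC' u, ?_, by simp [parG, hn'], (Finset.mem_sdiff.1 hnT0).1, ?_, ?_, ?_, ?_⟩
          · intro b'; simp [parG, hn']
          · have := phf
            rw [← pforms n phn, hformo n hnT0] at this
            exact this
          · have : u ∈ T.occs n := poccs ▸ Finset.mem_insert_self _ _
            rwa [hoccso n hnT0] at this
          · intro O hOo hOn
            rw [← poccso n' hn'S (Ne.symm hn'), hoccs,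
              hOo nB (fun e => hnB' e.symm), hOo nC (fun e => hnC' e.symm)]
          · intro O hOo hOn m hm
            have hm' := Finset.mem_sdiff.1 hm
            have hmB : m ≠ nB := by
              intro e; apply hm'.2; simp [e]
            have hmC : m ≠ nC := by
              intro e; apply hm'.2; simp [e]
            have hmS : m ∈ S.names := by
              rw [← pnames, hnames]
              exact Finset.mem_insert_of_mem hm
            by_cases hmn : m = n
            · subst hmn
              rw [hSocc_n, hOn, hoccso m hm]
            · rw [← poccso m hmS hmn, hoccso m hm, ← hOo m hmn]
      obtain ⟨S0, hps, hWF0', hn0names, hf0, hocc0o, hocc0n, hpimg⟩ :=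
        core_par T0 hWF0 (fun x => relab1 nB n' false (relab1 nC n' true x))
          (parG nB nC n') n n₀ u u₀ a b c hgf hfgc hfu hgu hgu0 hn₀ hform₀ hocc₀
          hcpart phc0 phc1 hnuc
      have hS0 : SeqNetW S0 := ih S0 hps hWF0'
      refine SeqNetW.parr S0 S nB nC n' hS0 (hn0names ▸ hnB) (hn0names ▸ hnC) hBC
        (hn0names ▸ hfresh) ?_ ?_ ?_ ?_ ?_ ?_ hWF
      · rw [hn0names, ← hnames]
        exact pnames.symm
      · rw [hf0, ← hform]
        exact (pforms n' hn'S).symm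
      · intro m hm
        rw [hn0names] at hm
        rw [hf0, ← hformo m hm]
        have hmS : m ∈ S.names := by
          rw [← pnames, hnames]
          exact Finset.mem_insert_of_mem hm
        exact (pforms m hmS).symm
      · exact hOcc1 S0.occs (fun m hm => hocc0o m hm) (by rw [hocc0n])
      · intro m hm
        rw [hn0names] at hm
        exact hOcc2 S0.occs (fun m hm => hocc0o m hm) (by rw [hocc0n]) m hm
      · rw [hpimg, hSpart, hpart]
    | tens n u a b c1 c2 phn phf ph0 ph1 phc1 phc2 pne12 phm0 phm1 pnames pforms poccs
        poccso ppart =>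
      have hnuS : u ∉ S.occs n := hWF.parent_not_occ phn ph0
      have hSocc_n : S.occs n =
          insert (u ++ [false]) (insert (u ++ [true]) ((T.occs n).erase u)) :=
        surgery_invert poccs ph0 ph1 hnuS (by simp)
      have hc1sub : c1 ⊆ S.leaves := hWF.class_subset_leaves phc1
      have hc2sub : c2 ⊆ S.leaves := hWF.class_subset_leaves phc2
      have hnuc : (n, u) ∉ c1 ∪ c2 := by
        intro h
        rcases Finset.mem_union.1 h with h | h
        · exact hnuS (hWF.mem_class phc1 h).2
        · exact hnuS (hWF.mem_class phc2 h).2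
      have hdisj12 : Disjoint c1 c2 := hWF.class_disjoint phc1 phc2 pne12
      have hfgc : ∀ x ∈ c1 ∪ c2, (fun x => relab1 nB n' false (relab1 nC n' true x))
          (parG nB nC n' x) = x := by
        intro x hx
        rcases Finset.mem_union.1 hx with h | h
        · exact hfgS x (hc1sub h)
        · exact hfgS x (hc2sub h)
      have hc'T : insert (n, u) (((c1 ∪ c2).erase (n, u ++ [false])).erase (n, u ++ [true]))
          ∈ T.part := ppart ▸ Finset.mem_insert_self _ _
      have hcpart : (insert (n, u) (((c1 ∪ c2).erase (n, u ++ [false])).erase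
          (n, u ++ [true]))).image (parG nB nC n') ∈ T0.part := by
        rw [hpart] at hc'T
        obtain ⟨d, hd, hde⟩ := Finset.mem_image.1 hc'T
        rw [← hde, image_image_id (fun x hx => hgf x ((hWF0.mem_class hd hx).1))]
        exact hd
      have hc'notS : insert (n, u) (((c1 ∪ c2).erase (n, u ++ [false])).erase
          (n, u ++ [true])) ∉ S.part :=
        fun h => hnuS ((hWF.mem_class h (Finset.mem_insert_self _ _)).2)
      have hSpart : S.part = insert c1 (insert c2 (T.part.erase (insert (n, u)
          (((c1 ∪ c2).erase (n, u ++ [false])).erase (n, u ++ [true]))))) :=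
        part_invert2 ppart phc1 phc2 hc'notS
      have hn'S : n' ∈ S.names := by
        rw [← pnames, hnames]; exact Finset.mem_insert_self _ _
      obtain ⟨n₀, u₀, hfu, hgu, hgu0, hn₀, hform₀, hocc₀, hOcc1, hOcc2⟩ :
          ∃ n₀ u₀,
            (fun x => relab1 nB n' false (relab1 nC n' true x)) (n₀, u₀) = (n, u) ∧
            (∀ b' : Bool, parG nB nC n' (n, u ++ [b']) = (n₀, u₀ ++ [b'])) ∧
            parG nB nC n' (n, u) = (n₀, u₀) ∧
            n₀ ∈ T0.names ∧ (T0.form n₀).subAt u₀ = some (.tens a b) ∧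
            u₀ ∈ T0.occs n₀ ∧
            (∀ O : ℕ → Finset (List Bool), (∀ m, m ≠ n₀ → O m = T0.occs m) →
              O n₀ = insert (u₀ ++ [false]) (insert (u₀ ++ [true]) ((T0.occs n₀).erase u₀)) →
              S.occs n' = (O nB).image (fun v => false :: v) ∪
                (O nC).image (fun v => true :: v)) ∧
            (∀ O : ℕ → Finset (List Bool), (∀ m, m ≠ n₀ → O m = T0.occs m) →
              O n₀ = insert (u₀ ++ [false]) (insert (u₀ ++ [true]) ((T0.occs n₀).erase u₀)) →
              ∀ m ∈ T0.names \ ({nB, nC} : Finset ℕ), S.occs m = O m) := by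
        by_cases hn' : n = n'
        · subst hn'
          have huT : u ∈ T.occs n := poccs ▸ Finset.mem_insert_self _ _
          rw [hoccs] at huT
          rcases Finset.mem_union.1 huT with hu | hu
          · obtain ⟨u', hu', rfl⟩ := Finset.mem_image.1 hu
            refine ⟨nB, u', parF_eval_B hBC u', ?_, by simp [parG], hnB, ?_, hu', ?_, ?_⟩
            · intro b'
              show parG nB nC n (n, false :: (u' ++ [b'])) = _
              simp [parG]
            · have := phf
              rw [← pforms n phn, hform] at this
              simpa [MLLForm.subAt] using this
            · intro O hOo hOn
              rw [hSocc_n, hoccs, hOn, hOo nC (Ne.symm hBC)]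
              exact occ_comp_left
            · intro O hOo hOn m hm
              have hm' := Finset.mem_sdiff.1 hm
              have hmB : m ≠ nB := by
                intro e; apply hm'.2; simp [e]
              have hmC : m ≠ nC := by
                intro e; apply hm'.2; simp [e]
              have hmn : m ≠ n := fun e => hfresh (e ▸ hm'.1)
              have hmS : m ∈ S.names := by
                rw [← pnames, hnames]
                exact Finset.mem_insert_of_mem hm
              rw [← poccso m hmS hmn, hoccso m hm, ← hOo m hmB]
          · obtain ⟨u', hu', rfl⟩ := Finset.mem_image.1 hu
            refine ⟨nC, u', parF_eval_C hBn' u', ?_, by simp [parG], hnC, ?_, hu', ?_, ?_⟩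
            · intro b'
              show parG nB nC n (n, true :: (u' ++ [b'])) = _
              simp [parG]
            · have := phf
              rw [← pforms n phn, hform] at this
              simpa [MLLForm.subAt] using this
            · intro O hOo hOn
              rw [hSocc_n, hoccs, hOn, hOo nB hBC]
              exact occ_comp_right
            · intro O hOo hOn m hm
              have hm' := Finset.mem_sdiff.1 hm
              have hmB : m ≠ nB := by
                intro e; apply hm'.2; simp [e]
              have hmC : m ≠ nC := by
                intro e; apply hm'.2; simp [e]
              have hmn : m ≠ n := fun e => hfresh (e ▸ hm'.1)
              have hmS : m ∈ S.names := by
                rw [← pnames, hnames]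
                exact Finset.mem_insert_of_mem hm
              rw [← poccso m hmS hmn, hoccso m hm, ← hOo m hmC]
        · have hnB' : n ≠ nB := fun e => hnBS (e ▸ phn)
          have hnC' : n ≠ nC := fun e => hnCS (e ▸ phn)
          have hnT0 : n ∈ T0.names \ ({nB, nC} : Finset ℕ) := by
            have : n ∈ T.names := pnames ▸ phn
            rw [hnames] at this
            rcases Finset.mem_insert.1 this with e | e
            · exact absurd e hn'
            · exact e
          refine ⟨n, u, parF_eval_O hnB' hnC' u, ?_, by simp [parG, hn'], (Finset.mem_sdiff.1 hnT0).1, ?_, ?_, ?_, ?_⟩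
          · intro b'; simp [parG, hn']
          · have := phf
            rw [← pforms n phn, hformo n hnT0] at this
            exact this
          · have : u ∈ T.occs n := poccs ▸ Finset.mem_insert_self _ _
            rwa [hoccso n hnT0] at this
          · intro O hOo hOn
            rw [← poccso n' hn'S (Ne.symm hn'), hoccs,
              hOo nB (fun e => hnB' e.symm), hOo nC (fun e => hnC' e.symm)]
          · intro O hOo hOn m hm
            have hm' := Finset.mem_sdiff.1 hm
            have hmB : m ≠ nB := by
              intro e; apply hm'.2; simp [e]
            have hmC : m ≠ nC := by
              intro e; apply hm'.2; simp [e]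
            have hmS : m ∈ S.names := by
              rw [← pnames, hnames]
              exact Finset.mem_insert_of_mem hm
            by_cases hmn : m = n
            · subst hmn
              rw [hSocc_n, hOn, hoccso m hm]
            · rw [← poccso m hmS hmn, hoccso m hm, ← hOo m hmn]
      obtain ⟨S0, hps, hWF0', hn0names, hf0, hocc0o, hocc0n, hpimg⟩ :=
        core_tens T0 hWF0 (fun x => relab1 nB n' false (relab1 nC n' true x))
          (parG nB nC n') n n₀ u u₀ a b c1 c2 hgf hfgc hfu hgu hgu0 hn₀ hform₀ hocc₀
          hcpart phm0 phm1 pne12 hdisj12 hnuc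
      have hS0 : SeqNetW S0 := ih S0 hps hWF0'
      refine SeqNetW.parr S0 S nB nC n' hS0 (hn0names ▸ hnB) (hn0names ▸ hnC) hBC
        (hn0names ▸ hfresh) ?_ ?_ ?_ ?_ ?_ ?_ hWF
      · rw [hn0names, ← hnames]
        exact pnames.symm
      · rw [hf0, ← hform]
        exact (pforms n' hn'S).symm
      · intro m hm
        rw [hn0names] at hm
        rw [hf0, ← hformo m hm]
        have hmS : m ∈ S.names := by
          rw [← pnames, hnames]
          exact Finset.mem_insert_of_mem hm
        exact (pforms m hmS).symm
      · exact hOcc1 S0.occs (fun m hm => hocc0o m hm) (by rw [hocc0n])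
      · intro m hm
        rw [hn0names] at hm
        exact hOcc2 S0.occs (fun m hm => hocc0o m hm) (by rw [hocc0n]) m hm
      · rw [hpimg, hSpart, hpart]
  | tens T1 T2 T nB nC n' hSeq1 hSeq2 hdisjT hnB hnC hfresh hnames hform hform1 hform2
      hoccs hoccs1 hoccs2 hpart hWFT ih1 ih2 =>
    intro S hst hWF
    have hWF1 : T1.WF := hSeq1.wf
    have hWF2 : T2.WF := hSeq2.wf
    have hfresh1 : n' ∉ T1.names := fun h => hfresh (Finset.mem_union_left _ h)
    have hfresh2 : n' ∉ T2.names := fun h => hfresh (Finset.mem_union_right _ h)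
    have hBn' : n' ≠ nB := fun e => hfresh1 (e ▸ hnB)
    have hCn' : n' ≠ nC := fun e => hfresh2 (e ▸ hnC)
    have hgf1 : ∀ x : Leaf, x.1 ∈ T1.names → tensG nB n' false (relab1 nB n' false x) = x :=
      fun x hx => tensG_gf x (fun e => hfresh1 (e ▸ hx))
    have hgf2 : ∀ x : Leaf, x.1 ∈ T2.names → tensG nC n' true (relab1 nC n' true x) = x :=
      fun x hx => tensG_gf x (fun e => hfresh2 (e ▸ hx))
    have hnBT : nB ∉ T.names := by
      rw [hnames]
      intro h
      rcases Finset.mem_insert.1 h with e | h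
      · exact hBn' e.symm
      rcases Finset.mem_union.1 h with h | h
      · exact (Finset.mem_erase.1 h).1 rfl
      · exact (Finset.disjoint_left.1 hdisjT) hnB (Finset.mem_of_mem_erase h)
    have hnCT : nC ∉ T.names := by
      rw [hnames]
      intro h
      rcases Finset.mem_insert.1 h with e | h
      · exact hCn' e.symm
      rcases Finset.mem_union.1 h with h | h
      · exact (Finset.disjoint_left.1 hdisjT) (Finset.mem_of_mem_erase h) hnC
      · exact (Finset.mem_erase.1 h).1 rfl
    cases hst with
    | parr n u a b c phn phf ph0 ph1 phc phc0 phc1 pnames pforms poccs poccso ppart =>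
      have hnBS : nB ∉ S.names := pnames ▸ hnBT
      have hnCS : nC ∉ S.names := pnames ▸ hnCT
      have hnuS : u ∉ S.occs n := hWF.parent_not_occ phn ph0
      have hSocc_n : S.occs n =
          insert (u ++ [false]) (insert (u ++ [true]) ((T.occs n).erase u)) :=
        surgery_invert poccs ph0 ph1 hnuS (by simp)
      have hcsub : c ⊆ S.leaves := hWF.class_subset_leaves phc
      have hnuc : (n, u) ∉ c := fun h => hnuS (hWF.mem_class phc h).2
      have hc'T : insert (n, u) ((c.erase (n, u ++ [false])).erase (n, u ++ [true]))
          ∈ T.part := ppart ▸ Finset.mem_insert_self _ _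
      have hc'notS : insert (n, u) ((c.erase (n, u ++ [false])).erase (n, u ++ [true]))
          ∉ S.part := fun h => hnuS ((hWF.mem_class h (Finset.mem_insert_self _ _)).2)
      have hSpart : S.part = insert c (T.part.erase (insert (n, u)
          ((c.erase (n, u ++ [false])).erase (n, u ++ [true])))) :=
        part_invert1 ppart phc hc'notS
      have hn'S : n' ∈ S.names := by
        rw [← pnames, hnames]; exact Finset.mem_insert_self _ _
      rw [hpart] at hc'T
      rcases Finset.mem_union.1 hc'T with hcs | hcs
      · -- the touched class comes from the first component
        obtain ⟨d, hd, hde⟩ := Finset.mem_image.1 hcs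
        have hcpart : (insert (n, u) ((c.erase (n, u ++ [false])).erase
            (n, u ++ [true]))).image (tensG nB n' false) ∈ T1.part := by
          rw [← hde, image_image_id (fun x hx => hgf1 x ((hWF1.mem_class hd hx).1))]
          exact hd
        have hfgc : ∀ x ∈ c, relab1 nB n' false (tensG nB n' false x) = x :=
          fun x hx => tensG_fg x (fun e => hnBS (e ▸ (PPS.mem_leaves.1 (hcsub hx)).1))
        have hnotin2 : insert (n, u) ((c.erase (n, u ++ [false])).erase (n, u ++ [true]))
            ∉ T2.part.image (Finset.image (relab1 nC n' true)) := by
          intro hmem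
          obtain ⟨e, he, hee⟩ := Finset.mem_image.1 hmem
          exact sides_ne hWF1 hWF2 hdisjT hfresh1 hfresh2 hd he (hde.trans hee.symm)
        obtain ⟨n₀, u₀, hfu, hgu, hgu0, hn₀, hform₀, hocc₀, hOcc1, hOcc2, hOcc3⟩ :
            ∃ n₀ u₀,
              relab1 nB n' false (n₀, u₀) = (n, u) ∧
              (∀ b' : Bool, tensG nB n' false (n, u ++ [b']) = (n₀, u₀ ++ [b'])) ∧
              tensG nB n' false (n, u) = (n₀, u₀) ∧
              n₀ ∈ T1.names ∧ (T1.form n₀).subAt u₀ = some (.parr a b) ∧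
              u₀ ∈ T1.occs n₀ ∧
              (∀ O : ℕ → Finset (List Bool), (∀ m, m ≠ n₀ → O m = T1.occs m) →
                O n₀ = insert (u₀ ++ [false]) (insert (u₀ ++ [true]) ((T1.occs n₀).erase u₀)) →
                S.occs n' = (O nB).image (fun v => false :: v) ∪
                  (T2.occs nC).image (fun v => true :: v)) ∧
              (∀ O : ℕ → Finset (List Bool), (∀ m, m ≠ n₀ → O m = T1.occs m) →
                O n₀ = insert (u₀ ++ [false]) (insert (u₀ ++ [true]) ((T1.occs n₀).erase u₀)) →
                ∀ m ∈ T1.names.erase nB, S.occs m = O m) ∧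
              (∀ m ∈ T2.names.erase nC, S.occs m = T2.occs m) := by
          have hmemcc : (n, u) ∈ Finset.image (relab1 nB n' false) d := by
            rw [hde]; exact Finset.mem_insert_self _ _
          obtain ⟨x, hx, hxe⟩ := Finset.mem_image.1 hmemcc
          by_cases hn' : n = n'
          · subst hn'
            have hshape : ∃ u₂, u = false :: u₂ ∧ (nB, u₂) ∈ d := by
              by_cases hxB : x.1 = nB
              · rw [relab1_eq' hxB] at hxe
                refine ⟨x.2, (congrArg Prod.snd hxe).symm, ?_⟩
                have : x = (nB, x.2) := Prod.ext hxB rfl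
                exact this ▸ hx
              · rw [relab1_ne _ _ _ hxB] at hxe
                have e : x.1 = n := by simpa using congrArg Prod.fst hxe
                exact absurd (e ▸ (hWF1.mem_class hd hx).1) hfresh1
            obtain ⟨u₂, rfl, hnBd⟩ := hshape
            have hu₂ : u₂ ∈ T1.occs nB := (hWF1.mem_class hd hnBd).2
            refine ⟨nB, u₂, relab1_eq _ _ _ _, ?_, by simp [tensG], hnB, ?_, hu₂, ?_, ?_, ?_⟩
            · intro b'
              show tensG nB n false (n, false :: (u₂ ++ [b'])) = _
              simp [tensG]
            · have := phf
              rw [← pforms n phn, hform] at this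
              simpa [MLLForm.subAt] using this
            · intro O hOo hOn
              rw [hSocc_n, hoccs, hOn]
              exact occ_comp_left
            · intro O hOo hOn m hm
              have hmB : m ≠ nB := (Finset.mem_erase.1 hm).1
              have hmT1 : m ∈ T1.names := Finset.mem_of_mem_erase hm
              have hmn : m ≠ n := fun e => hfresh1 (e ▸ hmT1)
              have hmS : m ∈ S.names := by
                rw [← pnames, hnames]
                exact Finset.mem_insert_of_mem (Finset.mem_union_left _ hm)
              rw [← poccso m hmS hmn, hoccs1 m hm, ← hOo m hmB]
            · intro m hm
              have hmT2 : m ∈ T2.names := Finset.mem_of_mem_erase hm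
              have hmn : m ≠ n := fun e => hfresh2 (e ▸ hmT2)
              have hmS : m ∈ S.names := by
                rw [← pnames, hnames]
                exact Finset.mem_insert_of_mem (Finset.mem_union_right _ hm)
              rw [← poccso m hmS hmn, hoccs2 m hm]
          · have hnT1 : n ∈ T1.names := by
              by_cases hxB : x.1 = nB
              · rw [relab1_eq' hxB] at hxe
                have e : n' = n := by simpa using congrArg Prod.fst hxe
                exact absurd e.symm hn'
              · rw [relab1_ne _ _ _ hxB] at hxe
                have e : x.1 = n := by simpa using congrArg Prod.fst hxe
                exact e ▸ (hWF1.mem_class hd hx).1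
            have hnB' : n ≠ nB := fun e => hnBS (e ▸ phn)
            have hnerase : n ∈ T1.names.erase nB := Finset.mem_erase.2 ⟨hnB', hnT1⟩
            refine ⟨n, u, relab1_ne _ _ _ (by simpa using hnB'), ?_,
              by simp [tensG, hn'], hnT1, ?_, ?_, ?_, ?_, ?_⟩
            · intro b'; simp [tensG, hn']
            · have := phf
              rw [← pforms n phn, hform1 n hnerase] at this
              exact this
            · have : u ∈ T.occs n := poccs ▸ Finset.mem_insert_self _ _
              rwa [hoccs1 n hnerase] at this
            · intro O hOo hOn
              rw [← poccso n' hn'S (Ne.symm hn'), hoccs, hOo nB (fun e => hnB' e.symm)]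
            · intro O hOo hOn m hm
              have hmB : m ≠ nB := (Finset.mem_erase.1 hm).1
              have hmT1 : m ∈ T1.names := Finset.mem_of_mem_erase hm
              have hmS : m ∈ S.names := by
                rw [← pnames, hnames]
                exact Finset.mem_insert_of_mem (Finset.mem_union_left _ hm)
              by_cases hmn : m = n
              · subst hmn
                rw [hSocc_n, hOn, hoccs1 m hm]
              · rw [← poccso m hmS hmn, hoccs1 m hm, ← hOo m hmn]
            · intro m hm
              have hmT2 : m ∈ T2.names := Finset.mem_of_mem_erase hm
              have hmn : m ≠ n := fun e =>
                (Finset.disjoint_left.1 hdisjT) hnT1 (e ▸ hmT2)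
              have hmS : m ∈ S.names := by
                rw [← pnames, hnames]
                exact Finset.mem_insert_of_mem (Finset.mem_union_right _ hm)
              rw [← poccso m hmS hmn, hoccs2 m hm]
        obtain ⟨S0, hps, hWF0', hn0names, hf0, hocc0o, hocc0n, hpimg⟩ :=
          core_par T1 hWF1 (relab1 nB n' false) (tensG nB n' false) n n₀ u u₀ a b c
            hgf1 hfgc hfu hgu hgu0 hn₀ hform₀ hocc₀ hcpart phc0 phc1 hnuc
        have hS0 : SeqNetW S0 := ih1 S0 hps hWF0'
        refine SeqNetW.tens S0 T2 S nB nC n' hS0 hSeq2 (hn0names ▸ hdisjT)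
          (hn0names ▸ hnB) hnC (hn0names ▸ hfresh) ?_ ?_ ?_ ?_ ?_ ?_ ?_ ?_ hWF
        · rw [hn0names, ← hnames]
          exact pnames.symm
        · rw [hf0, ← hform]
          exact (pforms n' hn'S).symm
        · intro m hm
          rw [hn0names] at hm
          rw [hf0, ← hform1 m hm]
          have hmS : m ∈ S.names := by
            rw [← pnames, hnames]
            exact Finset.mem_insert_of_mem (Finset.mem_union_left _ hm)
          exact (pforms m hmS).symm
        · intro m hm
          rw [← hform2 m hm]
          have hmS : m ∈ S.names := by
            rw [← pnames, hnames]
            exact Finset.mem_insert_of_mem (Finset.mem_union_right _ hm)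
          exact (pforms m hmS).symm
        · exact hOcc1 S0.occs (fun m hm => hocc0o m hm) (by rw [hocc0n])
        · intro m hm
          rw [hn0names] at hm
          exact hOcc2 S0.occs (fun m hm => hocc0o m hm) (by rw [hocc0n]) m hm
        · exact hOcc3
        · rw [hpimg, hSpart, hpart, Finset.erase_union_distrib,
            Finset.erase_eq_of_notMem hnotin2, ← Finset.insert_union]
      · -- the touched class comes from the second component
        obtain ⟨d, hd, hde⟩ := Finset.mem_image.1 hcs
        have hcpart : (insert (n, u) ((c.erase (n, u ++ [false])).erase
            (n, u ++ [true]))).image (tensG nC n' true) ∈ T2.part := by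
          rw [← hde, image_image_id (fun x hx => hgf2 x ((hWF2.mem_class hd hx).1))]
          exact hd
        have hfgc : ∀ x ∈ c, relab1 nC n' true (tensG nC n' true x) = x :=
          fun x hx => tensG_fg x (fun e => hnCS (e ▸ (PPS.mem_leaves.1 (hcsub hx)).1))
        have hnotin1 : insert (n, u) ((c.erase (n, u ++ [false])).erase (n, u ++ [true]))
            ∉ T1.part.image (Finset.image (relab1 nB n' false)) := by
          intro hmem
          obtain ⟨e, he, hee⟩ := Finset.mem_image.1 hmem
          exact sides_ne hWF1 hWF2 hdisjT hfresh1 hfresh2 he hd (hee.trans hde.symm)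
        obtain ⟨n₀, u₀, hfu, hgu, hgu0, hn₀, hform₀, hocc₀, hOcc1, hOcc2, hOcc3⟩ :
            ∃ n₀ u₀,
              relab1 nC n' true (n₀, u₀) = (n, u) ∧
              (∀ b' : Bool, tensG nC n' true (n, u ++ [b']) = (n₀, u₀ ++ [b'])) ∧
              tensG nC n' true (n, u) = (n₀, u₀) ∧
              n₀ ∈ T2.names ∧ (T2.form n₀).subAt u₀ = some (.parr a b) ∧
              u₀ ∈ T2.occs n₀ ∧
              (∀ O : ℕ → Finset (List Bool), (∀ m, m ≠ n₀ → O m = T2.occs m) →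
                O n₀ = insert (u₀ ++ [false]) (insert (u₀ ++ [true]) ((T2.occs n₀).erase u₀)) →
                S.occs n' = (T1.occs nB).image (fun v => false :: v) ∪
                  (O nC).image (fun v => true :: v)) ∧
              (∀ m ∈ T1.names.erase nB, S.occs m = T1.occs m) ∧
              (∀ O : ℕ → Finset (List Bool), (∀ m, m ≠ n₀ → O m = T2.occs m) →
                O n₀ = insert (u₀ ++ [false]) (insert (u₀ ++ [true]) ((T2.occs n₀).erase u₀)) →
                ∀ m ∈ T2.names.erase nC, S.occs m = O m) := by
          have hmemcc : (n, u) ∈ Finset.image (relab1 nC n' true) d := by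
            rw [hde]; exact Finset.mem_insert_self _ _
          obtain ⟨x, hx, hxe⟩ := Finset.mem_image.1 hmemcc
          by_cases hn' : n = n'
          · subst hn'
            have hshape : ∃ u₂, u = true :: u₂ ∧ (nC, u₂) ∈ d := by
              by_cases hxC : x.1 = nC
              · rw [relab1_eq' hxC] at hxe
                refine ⟨x.2, (congrArg Prod.snd hxe).symm, ?_⟩
                have : x = (nC, x.2) := Prod.ext hxC rfl
                exact this ▸ hx
              · rw [relab1_ne _ _ _ hxC] at hxe
                have e : x.1 = n := by simpa using congrArg Prod.fst hxe
                exact absurd (e ▸ (hWF2.mem_class hd hx).1) hfresh2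
            obtain ⟨u₂, rfl, hnCd⟩ := hshape
            have hu₂ : u₂ ∈ T2.occs nC := (hWF2.mem_class hd hnCd).2
            refine ⟨nC, u₂, relab1_eq _ _ _ _, ?_, by simp [tensG], hnC, ?_, hu₂, ?_, ?_, ?_⟩
            · intro b'
              show tensG nC n true (n, true :: (u₂ ++ [b'])) = _
              simp [tensG]
            · have := phf
              rw [← pforms n phn, hform] at this
              simpa [MLLForm.subAt] using this
            · intro O hOo hOn
              rw [hSocc_n, hoccs, hOn]
              exact occ_comp_right
            · intro m hm
              have hmT1 : m ∈ T1.names := Finset.mem_of_mem_erase hm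
              have hmn : m ≠ n := fun e => hfresh1 (e ▸ hmT1)
              have hmS : m ∈ S.names := by
                rw [← pnames, hnames]
                exact Finset.mem_insert_of_mem (Finset.mem_union_left _ hm)
              rw [← poccso m hmS hmn, hoccs1 m hm]
            · intro O hOo hOn m hm
              have hmC : m ≠ nC := (Finset.mem_erase.1 hm).1
              have hmT2 : m ∈ T2.names := Finset.mem_of_mem_erase hm
              have hmn : m ≠ n := fun e => hfresh2 (e ▸ hmT2)
              have hmS : m ∈ S.names := by
                rw [← pnames, hnames]
                exact Finset.mem_insert_of_mem (Finset.mem_union_right _ hm)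
              rw [← poccso m hmS hmn, hoccs2 m hm, ← hOo m hmC]
          · have hnT2 : n ∈ T2.names := by
              by_cases hxC : x.1 = nC
              · rw [relab1_eq' hxC] at hxe
                have e : n' = n := by simpa using congrArg Prod.fst hxe
                exact absurd e.symm hn'
              · rw [relab1_ne _ _ _ hxC] at hxe
                have e : x.1 = n := by simpa using congrArg Prod.fst hxe
                exact e ▸ (hWF2.mem_class hd hx).1
            have hnC' : n ≠ nC := fun e => hnCS (e ▸ phn)
            have hnerase : n ∈ T2.names.erase nC := Finset.mem_erase.2 ⟨hnC', hnT2⟩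
            refine ⟨n, u, relab1_ne _ _ _ (by simpa using hnC'), ?_,
              by simp [tensG, hn'], hnT2, ?_, ?_, ?_, ?_, ?_⟩
            · intro b'; simp [tensG, hn']
            · have := phf
              rw [← pforms n phn, hform2 n hnerase] at this
              exact this
            · have : u ∈ T.occs n := poccs ▸ Finset.mem_insert_self _ _
              rwa [hoccs2 n hnerase] at this
            · intro O hOo hOn
              rw [← poccso n' hn'S (Ne.symm hn'), hoccs, hOo nC (fun e => hnC' e.symm)]
            · intro m hm
              have hmT1 : m ∈ T1.names := Finset.mem_of_mem_erase hm
              have hmn : m ≠ n := fun e =>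
                (Finset.disjoint_left.1 hdisjT) (e ▸ hmT1) hnT2
              have hmS : m ∈ S.names := by
                rw [← pnames, hnames]
                exact Finset.mem_insert_of_mem (Finset.mem_union_left _ hm)
              rw [← poccso m hmS hmn, hoccs1 m hm]
            · intro O hOo hOn m hm
              have hmC : m ≠ nC := (Finset.mem_erase.1 hm).1
              have hmT2 : m ∈ T2.names := Finset.mem_of_mem_erase hm
              have hmS : m ∈ S.names := by
                rw [← pnames, hnames]
                exact Finset.mem_insert_of_mem (Finset.mem_union_right _ hm)
              by_cases hmn : m = n
              · subst hmn
                rw [hSocc_n, hOn, hoccs2 m hm]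
              · rw [← poccso m hmS hmn, hoccs2 m hm, ← hOo m hmn]
        obtain ⟨S0, hps, hWF0', hn0names, hf0, hocc0o, hocc0n, hpimg⟩ :=
          core_par T2 hWF2 (relab1 nC n' true) (tensG nC n' true) n n₀ u u₀ a b c
            hgf2 hfgc hfu hgu hgu0 hn₀ hform₀ hocc₀ hcpart phc0 phc1 hnuc
        have hS0 : SeqNetW S0 := ih2 S0 hps hWF0'
        refine SeqNetW.tens T1 S0 S nB nC n' hSeq1 hS0 (hn0names ▸ hdisjT)
          hnB (hn0names ▸ hnC) (hn0names ▸ hfresh) ?_ ?_ ?_ ?_ ?_ ?_ ?_ ?_ hWF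
        · rw [hn0names, ← hnames]
          exact pnames.symm
        · rw [hf0, ← hform]
          exact (pforms n' hn'S).symm
        · intro m hm
          rw [← hform1 m hm]
          have hmS : m ∈ S.names := by
            rw [← pnames, hnames]
            exact Finset.mem_insert_of_mem (Finset.mem_union_left _ hm)
          exact (pforms m hmS).symm
        · intro m hm
          rw [hn0names] at hm
          rw [hf0, ← hform2 m hm]
          have hmS : m ∈ S.names := by
            rw [← pnames, hnames]
            exact Finset.mem_insert_of_mem (Finset.mem_union_right _ hm)
          exact (pforms m hmS).symm
        · exact hOcc1 S0.occs (fun m hm => hocc0o m hm) (by rw [hocc0n])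
        · exact hOcc2
        · intro m hm
          rw [hn0names] at hm
          exact hOcc3 S0.occs (fun m hm => hocc0o m hm) (by rw [hocc0n]) m hm
        · rw [hpimg, hSpart, hpart, Finset.erase_union_distrib,
            Finset.erase_eq_of_notMem hnotin1, Finset.union_insert]
    | tens n u a b c1 c2 phn phf ph0 ph1 phc1 phc2 pne12 phm0 phm1 pnames pforms poccs
        poccso ppart =>
      have hnBS : nB ∉ S.names := pnames ▸ hnBT
      have hnCS : nC ∉ S.names := pnames ▸ hnCT
      have hnuS : u ∉ S.occs n := hWF.parent_not_occ phn ph0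
      have hSocc_n : S.occs n =
          insert (u ++ [false]) (insert (u ++ [true]) ((T.occs n).erase u)) :=
        surgery_invert poccs ph0 ph1 hnuS (by simp)
      have hc1sub : c1 ⊆ S.leaves := hWF.class_subset_leaves phc1
      have hc2sub : c2 ⊆ S.leaves := hWF.class_subset_leaves phc2
      have hnuc : (n, u) ∉ c1 ∪ c2 := by
        intro h
        rcases Finset.mem_union.1 h with h | h
        · exact hnuS (hWF.mem_class phc1 h).2
        · exact hnuS (hWF.mem_class phc2 h).2
      have hdisj12 : Disjoint c1 c2 := hWF.class_disjoint phc1 phc2 pne12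
      have hc'T : insert (n, u) (((c1 ∪ c2).erase (n, u ++ [false])).erase (n, u ++ [true]))
          ∈ T.part := ppart ▸ Finset.mem_insert_self _ _
      have hc'notS : insert (n, u) (((c1 ∪ c2).erase (n, u ++ [false])).erase
          (n, u ++ [true])) ∉ S.part :=
        fun h => hnuS ((hWF.mem_class h (Finset.mem_insert_self _ _)).2)
      have hSpart : S.part = insert c1 (insert c2 (T.part.erase (insert (n, u)
          (((c1 ∪ c2).erase (n, u ++ [false])).erase (n, u ++ [true]))))) :=
        part_invert2 ppart phc1 phc2 hc'notS
      have hn'S : n' ∈ S.names := by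
        rw [← pnames, hnames]; exact Finset.mem_insert_self _ _
      rw [hpart] at hc'T
      rcases Finset.mem_union.1 hc'T with hcs | hcs
      · obtain ⟨d, hd, hde⟩ := Finset.mem_image.1 hcs
        have hcpart : (insert (n, u) (((c1 ∪ c2).erase (n, u ++ [false])).erase
            (n, u ++ [true]))).image (tensG nB n' false) ∈ T1.part := by
          rw [← hde, image_image_id (fun x hx => hgf1 x ((hWF1.mem_class hd hx).1))]
          exact hd
        have hfgc : ∀ x ∈ c1 ∪ c2, relab1 nB n' false (tensG nB n' false x) = x := by
          intro x hx
          rcases Finset.mem_union.1 hx with h | h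
          · exact tensG_fg x (fun e => hnBS (e ▸ (PPS.mem_leaves.1 (hc1sub h)).1))
          · exact tensG_fg x (fun e => hnBS (e ▸ (PPS.mem_leaves.1 (hc2sub h)).1))
        have hnotin2 : insert (n, u) (((c1 ∪ c2).erase (n, u ++ [false])).erase
            (n, u ++ [true])) ∉ T2.part.image (Finset.image (relab1 nC n' true)) := by
          intro hmem
          obtain ⟨e, he, hee⟩ := Finset.mem_image.1 hmem
          exact sides_ne hWF1 hWF2 hdisjT hfresh1 hfresh2 hd he (hde.trans hee.symm)
        obtain ⟨n₀, u₀, hfu, hgu, hgu0, hn₀, hform₀, hocc₀, hOcc1, hOcc2, hOcc3⟩ :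
            ∃ n₀ u₀,
              relab1 nB n' false (n₀, u₀) = (n, u) ∧
              (∀ b' : Bool, tensG nB n' false (n, u ++ [b']) = (n₀, u₀ ++ [b'])) ∧
              tensG nB n' false (n, u) = (n₀, u₀) ∧
              n₀ ∈ T1.names ∧ (T1.form n₀).subAt u₀ = some (.tens a b) ∧
              u₀ ∈ T1.occs n₀ ∧
              (∀ O : ℕ → Finset (List Bool), (∀ m, m ≠ n₀ → O m = T1.occs m) →
                O n₀ = insert (u₀ ++ [false]) (insert (u₀ ++ [true]) ((T1.occs n₀).erase u₀)) →
                S.occs n' = (O nB).image (fun v => false :: v) ∪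
                  (T2.occs nC).image (fun v => true :: v)) ∧
              (∀ O : ℕ → Finset (List Bool), (∀ m, m ≠ n₀ → O m = T1.occs m) →
                O n₀ = insert (u₀ ++ [false]) (insert (u₀ ++ [true]) ((T1.occs n₀).erase u₀)) →
                ∀ m ∈ T1.names.erase nB, S.occs m = O m) ∧
              (∀ m ∈ T2.names.erase nC, S.occs m = T2.occs m) := by
          have hmemcc : (n, u) ∈ Finset.image (relab1 nB n' false) d := by
            rw [hde]; exact Finset.mem_insert_self _ _
          obtain ⟨x, hx, hxe⟩ := Finset.mem_image.1 hmemcc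
          by_cases hn' : n = n'
          · subst hn'
            have hshape : ∃ u₂, u = false :: u₂ ∧ (nB, u₂) ∈ d := by
              by_cases hxB : x.1 = nB
              · rw [relab1_eq' hxB] at hxe
                refine ⟨x.2, (congrArg Prod.snd hxe).symm, ?_⟩
                have : x = (nB, x.2) := Prod.ext hxB rfl
                exact this ▸ hx
              · rw [relab1_ne _ _ _ hxB] at hxe
                have e : x.1 = n := by simpa using congrArg Prod.fst hxe
                exact absurd (e ▸ (hWF1.mem_class hd hx).1) hfresh1
            obtain ⟨u₂, rfl, hnBd⟩ := hshape
            have hu₂ : u₂ ∈ T1.occs nB := (hWF1.mem_class hd hnBd).2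
            refine ⟨nB, u₂, relab1_eq _ _ _ _, ?_, by simp [tensG], hnB, ?_, hu₂, ?_, ?_, ?_⟩
            · intro b'
              show tensG nB n false (n, false :: (u₂ ++ [b'])) = _
              simp [tensG]
            · have := phf
              rw [← pforms n phn, hform] at this
              simpa [MLLForm.subAt] using this
            · intro O hOo hOn
              rw [hSocc_n, hoccs, hOn]
              exact occ_comp_left
            · intro O hOo hOn m hm
              have hmB : m ≠ nB := (Finset.mem_erase.1 hm).1
              have hmT1 : m ∈ T1.names := Finset.mem_of_mem_erase hm
              have hmn : m ≠ n := fun e => hfresh1 (e ▸ hmT1)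
              have hmS : m ∈ S.names := by
                rw [← pnames, hnames]
                exact Finset.mem_insert_of_mem (Finset.mem_union_left _ hm)
              rw [← poccso m hmS hmn, hoccs1 m hm, ← hOo m hmB]
            · intro m hm
              have hmT2 : m ∈ T2.names := Finset.mem_of_mem_erase hm
              have hmn : m ≠ n := fun e => hfresh2 (e ▸ hmT2)
              have hmS : m ∈ S.names := by
                rw [← pnames, hnames]
                exact Finset.mem_insert_of_mem (Finset.mem_union_right _ hm)
              rw [← poccso m hmS hmn, hoccs2 m hm]
          · have hnT1 : n ∈ T1.names := by
              by_cases hxB : x.1 = nB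
              · rw [relab1_eq' hxB] at hxe
                have e : n' = n := by simpa using congrArg Prod.fst hxe
                exact absurd e.symm hn'
              · rw [relab1_ne _ _ _ hxB] at hxe
                have e : x.1 = n := by simpa using congrArg Prod.fst hxe
                exact e ▸ (hWF1.mem_class hd hx).1
            have hnB' : n ≠ nB := fun e => hnBS (e ▸ phn)
            have hnerase : n ∈ T1.names.erase nB := Finset.mem_erase.2 ⟨hnB', hnT1⟩
            refine ⟨n, u, relab1_ne _ _ _ (by simpa using hnB'), ?_,
              by simp [tensG, hn'], hnT1, ?_, ?_, ?_, ?_, ?_⟩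
            · intro b'; simp [tensG, hn']
            · have := phf
              rw [← pforms n phn, hform1 n hnerase] at this
              exact this
            · have : u ∈ T.occs n := poccs ▸ Finset.mem_insert_self _ _
              rwa [hoccs1 n hnerase] at this
            · intro O hOo hOn
              rw [← poccso n' hn'S (Ne.symm hn'), hoccs, hOo nB (fun e => hnB' e.symm)]
            · intro O hOo hOn m hm
              have hmB : m ≠ nB := (Finset.mem_erase.1 hm).1
              have hmT1 : m ∈ T1.names := Finset.mem_of_mem_erase hm
              have hmS : m ∈ S.names := by
                rw [← pnames, hnames]
                exact Finset.mem_insert_of_mem (Finset.mem_union_left _ hm)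
              by_cases hmn : m = n
              · subst hmn
                rw [hSocc_n, hOn, hoccs1 m hm]
              · rw [← poccso m hmS hmn, hoccs1 m hm, ← hOo m hmn]
            · intro m hm
              have hmT2 : m ∈ T2.names := Finset.mem_of_mem_erase hm
              have hmn : m ≠ n := fun e =>
                (Finset.disjoint_left.1 hdisjT) hnT1 (e ▸ hmT2)
              have hmS : m ∈ S.names := by
                rw [← pnames, hnames]
                exact Finset.mem_insert_of_mem (Finset.mem_union_right _ hm)
              rw [← poccso m hmS hmn, hoccs2 m hm]
        obtain ⟨S0, hps, hWF0', hn0names, hf0, hocc0o, hocc0n, hpimg⟩ :=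
          core_tens T1 hWF1 (relab1 nB n' false) (tensG nB n' false) n n₀ u u₀ a b c1 c2
            hgf1 hfgc hfu hgu hgu0 hn₀ hform₀ hocc₀ hcpart phm0 phm1 pne12 hdisj12 hnuc
        have hS0 : SeqNetW S0 := ih1 S0 hps hWF0'
        refine SeqNetW.tens S0 T2 S nB nC n' hS0 hSeq2 (hn0names ▸ hdisjT)
          (hn0names ▸ hnB) hnC (hn0names ▸ hfresh) ?_ ?_ ?_ ?_ ?_ ?_ ?_ ?_ hWF
        · rw [hn0names, ← hnames]
          exact pnames.symm
        · rw [hf0, ← hform]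
          exact (pforms n' hn'S).symm
        · intro m hm
          rw [hn0names] at hm
          rw [hf0, ← hform1 m hm]
          have hmS : m ∈ S.names := by
            rw [← pnames, hnames]
            exact Finset.mem_insert_of_mem (Finset.mem_union_left _ hm)
          exact (pforms m hmS).symm
        · intro m hm
          rw [← hform2 m hm]
          have hmS : m ∈ S.names := by
            rw [← pnames, hnames]
            exact Finset.mem_insert_of_mem (Finset.mem_union_right _ hm)
          exact (pforms m hmS).symm
        · exact hOcc1 S0.occs (fun m hm => hocc0o m hm) (by rw [hocc0n])
        · intro m hm
          rw [hn0names] at hm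
          exact hOcc2 S0.occs (fun m hm => hocc0o m hm) (by rw [hocc0n]) m hm
        · exact hOcc3
        · rw [hpimg, hSpart, hpart, Finset.erase_union_distrib,
            Finset.erase_eq_of_notMem hnotin2, ← Finset.insert_union, ← Finset.insert_union]
      · obtain ⟨d, hd, hde⟩ := Finset.mem_image.1 hcs
        have hcpart : (insert (n, u) (((c1 ∪ c2).erase (n, u ++ [false])).erase
            (n, u ++ [true]))).image (tensG nC n' true) ∈ T2.part := by
          rw [← hde, image_image_id (fun x hx => hgf2 x ((hWF2.mem_class hd hx).1))]
          exact hd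
        have hfgc : ∀ x ∈ c1 ∪ c2, relab1 nC n' true (tensG nC n' true x) = x := by
          intro x hx
          rcases Finset.mem_union.1 hx with h | h
          · exact tensG_fg x (fun e => hnCS (e ▸ (PPS.mem_leaves.1 (hc1sub h)).1))
          · exact tensG_fg x (fun e => hnCS (e ▸ (PPS.mem_leaves.1 (hc2sub h)).1))
        have hnotin1 : insert (n, u) (((c1 ∪ c2).erase (n, u ++ [false])).erase
            (n, u ++ [true])) ∉ T1.part.image (Finset.image (relab1 nB n' false)) := by
          intro hmem
          obtain ⟨e, he, hee⟩ := Finset.mem_image.1 hmem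
          exact sides_ne hWF1 hWF2 hdisjT hfresh1 hfresh2 he hd (hee.trans hde.symm)
        obtain ⟨n₀, u₀, hfu, hgu, hgu0, hn₀, hform₀, hocc₀, hOcc1, hOcc2, hOcc3⟩ :
            ∃ n₀ u₀,
              relab1 nC n' true (n₀, u₀) = (n, u) ∧
              (∀ b' : Bool, tensG nC n' true (n, u ++ [b']) = (n₀, u₀ ++ [b'])) ∧
              tensG nC n' true (n, u) = (n₀, u₀) ∧
              n₀ ∈ T2.names ∧ (T2.form n₀).subAt u₀ = some (.tens a b) ∧
              u₀ ∈ T2.occs n₀ ∧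
              (∀ O : ℕ → Finset (List Bool), (∀ m, m ≠ n₀ → O m = T2.occs m) →
                O n₀ = insert (u₀ ++ [false]) (insert (u₀ ++ [true]) ((T2.occs n₀).erase u₀)) →
                S.occs n' = (T1.occs nB).image (fun v => false :: v) ∪
                  (O nC).image (fun v => true :: v)) ∧
              (∀ m ∈ T1.names.erase nB, S.occs m = T1.occs m) ∧
              (∀ O : ℕ → Finset (List Bool), (∀ m, m ≠ n₀ → O m = T2.occs m) →
                O n₀ = insert (u₀ ++ [false]) (insert (u₀ ++ [true]) ((T2.occs n₀).erase u₀)) →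
                ∀ m ∈ T2.names.erase nC, S.occs m = O m) := by
          have hmemcc : (n, u) ∈ Finset.image (relab1 nC n' true) d := by
            rw [hde]; exact Finset.mem_insert_self _ _
          obtain ⟨x, hx, hxe⟩ := Finset.mem_image.1 hmemcc
          by_cases hn' : n = n'
          · subst hn'
            have hshape : ∃ u₂, u = true :: u₂ ∧ (nC, u₂) ∈ d := by
              by_cases hxC : x.1 = nC
              · rw [relab1_eq' hxC] at hxe
                refine ⟨x.2, (congrArg Prod.snd hxe).symm, ?_⟩
                have : x = (nC, x.2) := Prod.ext hxC rfl
                exact this ▸ hx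
              · rw [relab1_ne _ _ _ hxC] at hxe
                have e : x.1 = n := by simpa using congrArg Prod.fst hxe
                exact absurd (e ▸ (hWF2.mem_class hd hx).1) hfresh2
            obtain ⟨u₂, rfl, hnCd⟩ := hshape
            have hu₂ : u₂ ∈ T2.occs nC := (hWF2.mem_class hd hnCd).2
            refine ⟨nC, u₂, relab1_eq _ _ _ _, ?_, by simp [tensG], hnC, ?_, hu₂, ?_, ?_, ?_⟩
            · intro b'
              show tensG nC n true (n, true :: (u₂ ++ [b'])) = _
              simp [tensG]
            · have := phf
              rw [← pforms n phn, hform] at this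
              simpa [MLLForm.subAt] using this
            · intro O hOo hOn
              rw [hSocc_n, hoccs, hOn]
              exact occ_comp_right
            · intro m hm
              have hmT1 : m ∈ T1.names := Finset.mem_of_mem_erase hm
              have hmn : m ≠ n := fun e => hfresh1 (e ▸ hmT1)
              have hmS : m ∈ S.names := by
                rw [← pnames, hnames]
                exact Finset.mem_insert_of_mem (Finset.mem_union_left _ hm)
              rw [← poccso m hmS hmn, hoccs1 m hm]
            · intro O hOo hOn m hm
              have hmC : m ≠ nC := (Finset.mem_erase.1 hm).1
              have hmT2 : m ∈ T2.names := Finset.mem_of_mem_erase hm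
              have hmn : m ≠ n := fun e => hfresh2 (e ▸ hmT2)
              have hmS : m ∈ S.names := by
                rw [← pnames, hnames]
                exact Finset.mem_insert_of_mem (Finset.mem_union_right _ hm)
              rw [← poccso m hmS hmn, hoccs2 m hm, ← hOo m hmC]
          · have hnT2 : n ∈ T2.names := by
              by_cases hxC : x.1 = nC
              · rw [relab1_eq' hxC] at hxe
                have e : n' = n := by simpa using congrArg Prod.fst hxe
                exact absurd e.symm hn'
              · rw [relab1_ne _ _ _ hxC] at hxe
                have e : x.1 = n := by simpa using congrArg Prod.fst hxe
                exact e ▸ (hWF2.mem_class hd hx).1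
            have hnC' : n ≠ nC := fun e => hnCS (e ▸ phn)
            have hnerase : n ∈ T2.names.erase nC := Finset.mem_erase.2 ⟨hnC', hnT2⟩
            refine ⟨n, u, relab1_ne _ _ _ (by simpa using hnC'), ?_,
              by simp [tensG, hn'], hnT2, ?_, ?_, ?_, ?_, ?_⟩
            · intro b'; simp [tensG, hn']
            · have := phf
              rw [← pforms n phn, hform2 n hnerase] at this
              exact this
            · have : u ∈ T.occs n := poccs ▸ Finset.mem_insert_self _ _
              rwa [hoccs2 n hnerase] at this
            · intro O hOo hOn
              rw [← poccso n' hn'S (Ne.symm hn'), hoccs, hOo nC (fun e => hnC' e.symm)]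
            · intro m hm
              have hmT1 : m ∈ T1.names := Finset.mem_of_mem_erase hm
              have hmn : m ≠ n := fun e =>
                (Finset.disjoint_left.1 hdisjT) (e ▸ hmT1) hnT2
              have hmS : m ∈ S.names := by
                rw [← pnames, hnames]
                exact Finset.mem_insert_of_mem (Finset.mem_union_left _ hm)
              rw [← poccso m hmS hmn, hoccs1 m hm]
            · intro O hOo hOn m hm
              have hmC : m ≠ nC := (Finset.mem_erase.1 hm).1
              have hmT2 : m ∈ T2.names := Finset.mem_of_mem_erase hm
              have hmS : m ∈ S.names := by
                rw [← pnames, hnames]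
                exact Finset.mem_insert_of_mem (Finset.mem_union_right _ hm)
              by_cases hmn : m = n
              · subst hmn
                rw [hSocc_n, hOn, hoccs2 m hm]
              · rw [← poccso m hmS hmn, hoccs2 m hm, ← hOo m hmn]
        obtain ⟨S0, hps, hWF0', hn0names, hf0, hocc0o, hocc0n, hpimg⟩ :=
          core_tens T2 hWF2 (relab1 nC n' true) (tensG nC n' true) n n₀ u u₀ a b c1 c2
            hgf2 hfgc hfu hgu hgu0 hn₀ hform₀ hocc₀ hcpart phm0 phm1 pne12 hdisj12 hnuc
        have hS0 : SeqNetW S0 := ih2 S0 hps hWF0'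
        refine SeqNetW.tens T1 S0 S nB nC n' hSeq1 hS0 (hn0names ▸ hdisjT)
          hnB (hn0names ▸ hnC) (hn0names ▸ hfresh) ?_ ?_ ?_ ?_ ?_ ?_ ?_ ?_ hWF
        · rw [hn0names, ← hnames]
          exact pnames.symm
        · rw [hf0, ← hform]
          exact (pforms n' hn'S).symm
        · intro m hm
          rw [← hform1 m hm]
          have hmS : m ∈ S.names := by
            rw [← pnames, hnames]
            exact Finset.mem_insert_of_mem (Finset.mem_union_left _ hm)
          exact (pforms m hmS).symm
        · intro m hm
          rw [hn0names] at hm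
          rw [hf0, ← hform2 m hm]
          have hmS : m ∈ S.names := by
            rw [← pnames, hnames]
            exact Finset.mem_insert_of_mem (Finset.mem_union_right _ hm)
          exact (pforms m hmS).symm
        · exact hOcc1 S0.occs (fun m hm => hocc0o m hm) (by rw [hocc0n])
        · exact hOcc2
        · intro m hm
          rw [hn0names] at hm
          exact hOcc3 S0.occs (fun m hm => hocc0o m hm) (by rw [hocc0n]) m hm
        · rw [hpimg, hSpart, hpart, Finset.erase_union_distrib,
            Finset.erase_eq_of_notMem hnotin1, Finset.union_insert, Finset.union_insert]

end Aux9


/-- a paraproof structure satisfying the weak parsing criterion is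
sequentializable. -/
theorem weak_parsing_implies_sequentializable (S : PPS) (hWF : S.WF)
    (h : ∃ S', Relation.ReflTransGen Parse S S' ∧ Parsed S') : SeqNet S := by
  obtain ⟨S', hchain, hP⟩ := h
  have key : ∀ S0 : PPS, Relation.ReflTransGen Parse S0 S' → S0.WF → SeqNetW S0 := by
    intro S0 hch
    induction hch using Relation.ReflTransGen.head_induction_on with
    | refl => intro hwf; exact SeqNetW.ax _ hP.1 hP.2 hwf
    | head hstep _ ih =>
      intro hwf
      exact deparse (ih (parse_preserves_wf hwf hstep)) _ hstep hwf
  exact (key S hchain hWF).toSeqNet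
end

section
/- In a focused proof search for MALL where every sequent initially has at most one negative formula, this invariant is preserved: if the active formula is positive, each premise contains exactly one negative formula; if the active formula is negative (hence the unique one), each premise consists of positive formulas only. -/
/-! Multiplicative-additive linear logic (MALL). Atoms `atom n` are positive,
their duals `natom n` negative; tensor and plus are positive, par and with
negative. -/

inductive MALLForm : Type
  | atom : ℕ → MALLForm
  | natom : ℕ → MALLForm
  | tens : MALLForm → MALLForm → MALLForm
  | parr : MALLForm → MALLForm → MALLForm
  | plus : MALLForm → MALLForm → MALLForm
  | withh : MALLForm → MALLForm → MALLForm
  deriving DecidableEq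

namespace MALLForm

def dual : MALLForm → MALLForm
  | atom n => natom n
  | natom n => atom n
  | tens a b => parr a.dual b.dual
  | parr a b => tens a.dual b.dual
  | plus a b => withh a.dual b.dual
  | withh a b => plus a.dual b.dual

def isNeg : MALLForm → Bool
  | natom _ => true
  | parr _ _ => true
  | withh _ _ => true
  | _ => false

def isPos (A : MALLForm) : Bool := !A.isNeg

end MALLForm

/-- Provability in (monolateral, unit-free) MALL sequent calculus. -/
inductive Provable : Multiset MALLForm → Prop
  | ax (n : ℕ) : Provable {MALLForm.atom n, MALLForm.natom n}
  | tens {A B : MALLForm} {Γ Δ : Multiset MALLForm} :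
      Provable (A ::ₘ Γ) → Provable (B ::ₘ Δ) →
      Provable (MALLForm.tens A B ::ₘ (Γ + Δ))
  | parr {A B : MALLForm} {Γ : Multiset MALLForm} :
      Provable (A ::ₘ B ::ₘ Γ) → Provable (MALLForm.parr A B ::ₘ Γ)
  | plusL {A B : MALLForm} {Γ : Multiset MALLForm} :
      Provable (A ::ₘ Γ) → Provable (MALLForm.plus A B ::ₘ Γ)
  | plusR {A B : MALLForm} {Γ : Multiset MALLForm} :
      Provable (B ::ₘ Γ) → Provable (MALLForm.plus A B ::ₘ Γ)
  | withh {A B : MALLForm} {Γ : Multiset MALLForm} :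
      Provable (A ::ₘ Γ) → Provable (B ::ₘ Γ) → Provable (MALLForm.withh A B ::ₘ Γ)

/-- One branch of the complete decomposition of the synthetic connective
underlying a positive formula: a choice of a `⊕`-component together with the
splitting of all the `⊗`s, down to the negative subformulas. `PosDecomp P l`
means that `l` is the list of negative subformulas of one such branch. -/
inductive PosDecomp : MALLForm → List MALLForm → Prop
  | neg {N : MALLForm} (h : N.isNeg = true) : PosDecomp N [N]
  | tens {A B : MALLForm} {l₁ l₂ : List MALLForm} :
      PosDecomp A l₁ → PosDecomp B l₂ → PosDecomp (MALLForm.tens A B) (l₁ ++ l₂)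
  | plusL {A B : MALLForm} {l : List MALLForm} :
      PosDecomp A l → PosDecomp (MALLForm.plus A B) l
  | plusR {A B : MALLForm} {l : List MALLForm} :
      PosDecomp B l → PosDecomp (MALLForm.plus A B) l

/-- The complete decomposition of the synthetic connective underlying a negative
formula: `NegDecomp N L` means that `L` is the list of premises (each a list of
positive subformulas) of the corresponding negative synthetic rule (a `&` of
`⅋`s). -/
inductive NegDecomp : MALLForm → List (List MALLForm) → Prop
  | pos {P : MALLForm} (h : P.isPos = true) : NegDecomp P [[P]]
  | parr {A B : MALLForm} {L₁ L₂ : List (List MALLForm)} :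
      NegDecomp A L₁ → NegDecomp B L₂ →
      NegDecomp (MALLForm.parr A B) (L₁.flatMap fun l₁ => L₂.map fun l₂ => l₁ ++ l₂)
  | withh {A B : MALLForm} {L₁ L₂ : List (List MALLForm)} :
      NegDecomp A L₁ → NegDecomp B L₂ → NegDecomp (MALLForm.withh A B) (L₁ ++ L₂)

lemma posDecomp_all_neg {P : MALLForm} {l : List MALLForm} (h : PosDecomp P l) :
    ∀ A ∈ l, A.isNeg = true := by
  induction h with
  | neg h => simpa using h
  | tens _ _ ih1 ih2 => intro A hA; rcases List.mem_append.1 hA with h | h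
                        exacts [ih1 A h, ih2 A h]
  | plusL _ ih => exact ih
  | plusR _ ih => exact ih

lemma negDecomp_all_pos {N : MALLForm} {L : List (List MALLForm)} (h : NegDecomp N L) :
    ∀ l ∈ L, ∀ A ∈ l, A.isPos = true := by
  induction h with
  | pos h => intro l hl A hA; simp at hl hA; subst hl; simp at hA; subst hA; exact h
  | parr _ _ ih1 ih2 =>
      intro l hl A hA
      simp only [List.mem_flatMap, List.mem_map] at hl
      obtain ⟨l₁, h₁, l₂, h₂, rfl⟩ := hl
      rcases List.mem_append.1 hA with h | h
      exacts [ih1 l₁ h₁ A h, ih2 l₂ h₂ A h]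
  | withh _ _ ih1 ih2 =>
      intro l hl A hA
      rcases List.mem_append.1 hl with h | h
      exacts [ih1 l h A hA, ih2 l h A hA]

/-- in a focused proof search for MALL, the invariant "at most one
negative formula per sequent" is preserved: if the active formula is positive
(so that, by the focusing discipline, all the other formulas of the sequent are
positive), each premise of its synthetic rule contains exactly one negative
formula; if the active formula is negative (hence the unique negative one),
each premise of its synthetic rule consists of positive formulas only. -/
theorem focusing_invariant :
    (∀ (P : MALLForm) (l : List MALLForm) (Λ : Fin l.length → Multiset MALLForm)
        (Γ : Multiset MALLForm),
        P.isPos = true → (∀ A ∈ Γ, A.isPos = true) → PosDecomp P l →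
        Γ = Finset.univ.sum Λ →
        ∀ i : Fin l.length,
          Multiset.countP (fun A => A.isNeg = true) (l.get i ::ₘ Λ i) = 1) ∧
    (∀ (N : MALLForm) (L : List (List MALLForm)) (Γ : Multiset MALLForm),
        N.isNeg = true → (∀ A ∈ Γ, A.isPos = true) → NegDecomp N L →
        ∀ l ∈ L, ∀ A ∈ ((↑l : Multiset MALLForm) + Γ), A.isPos = true) := by
  constructor
  · intro P l Λ Γ _ hΓ hdec hsum i
    have hli : (l.get i).isNeg = true := posDecomp_all_neg hdec _ (l.get_mem i)
    rw [Multiset.countP_cons, if_pos hli]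
    have h0 : Multiset.countP (fun A => A.isNeg = true) (Λ i) = 0 := by
      rw [Multiset.countP_eq_zero]
      intro A hA
      have : A ∈ Γ := by
        rw [hsum]
        exact Multiset.mem_of_le (Finset.single_le_sum (f := Λ)
          (fun _ _ => Multiset.zero_le _) (Finset.mem_univ i)) hA
      have := hΓ A this
      simp [MALLForm.isPos] at this
      simp [this]
    omega
  · intro N L Γ _ hΓ hdec l hl A hA
    rcases Multiset.mem_add.1 hA with h | h
    · exact negDecomp_all_pos hdec l hl A (by simpa using h)
    · exact hΓ A h
end

section
/- The focalization property holds for MALL proof search: every provable sequent consisting only of positive formulas has a proof that begins (reading from the root) with a complete decomposition of the synthetic connective of at least one of its formulas. -/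
/-- `Focus P Γ` : the sequent `⊢ P, Γ` has a proof beginning (from the root)
with a complete decomposition of the synthetic connective underlying `P`:
tensor and plus rules are applied to `P` and its positive subformulas until all
exposed subformulas are negative (which are then released), or a positive atom
is reached (which must be closed by an axiom). -/
inductive Focus : MALLForm → Multiset MALLForm → Prop
  | release {N : MALLForm} {Γ : Multiset MALLForm} (h : N.isNeg = true) :
      Provable (N ::ₘ Γ) → Focus N Γ
  | atom (n : ℕ) : Focus (MALLForm.atom n) {MALLForm.natom n}
  | tens {A B : MALLForm} {Γ₁ Γ₂ : Multiset MALLForm} :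
      Focus A Γ₁ → Focus B Γ₂ → Focus (MALLForm.tens A B) (Γ₁ + Γ₂)
  | plusL {A B : MALLForm} {Γ : Multiset MALLForm} :
      Focus A Γ → Focus (MALLForm.plus A B) Γ
  | plusR {A B : MALLForm} {Γ : Multiset MALLForm} :
      Focus B Γ → Focus (MALLForm.plus A B) Γ

lemma erase_cons_of_mem {Q C : MALLForm} {S : Multiset MALLForm} (h : Q ∈ S) :
    (C ::ₘ S).erase Q = C ::ₘ S.erase Q := by
  by_cases hqc : Q = C
  · subst hqc; rw [Multiset.erase_cons_head, Multiset.cons_erase h]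
  · exact Multiset.erase_cons_tail _ (fun h => hqc h.symm)

lemma focus_ctx (C A : MALLForm) (E : Multiset MALLForm) (hApos : A.isPos = true)
    (tr : ∀ Θ : Multiset MALLForm, Provable (A ::ₘ Θ) → Provable (C ::ₘ (Θ + E))) :
    ∀ {Q : MALLForm} {Δ : Multiset MALLForm}, Focus Q Δ → A ∈ Δ →
      Focus Q (C ::ₘ (Δ.erase A + E)) := by
  intro Q Δ hF
  induction hF with
  | release hN p =>
    intro hA
    rw [← Multiset.cons_erase hA, Multiset.cons_swap] at p
    have := tr _ p
    rw [Multiset.cons_add, Multiset.cons_swap] at this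
    exact Focus.release hN this
  | atom n =>
    intro hA
    rw [Multiset.mem_singleton] at hA
    subst hA
    simp [MALLForm.isPos, MALLForm.isNeg] at hApos
  | tens F1 F2 ih1 ih2 =>
    intro hA
    rcases Multiset.mem_add.mp hA with h1 | h2
    · have := Focus.tens (ih1 h1) F2
      rw [Multiset.cons_add, add_right_comm] at this
      rwa [Multiset.erase_add_left_pos _ h1]
    · have := Focus.tens F1 (ih2 h2)
      rw [Multiset.add_cons, ← add_assoc] at this
      rwa [Multiset.erase_add_right_pos _ h2]
  | plusL F ih => exact fun hA => Focus.plusL (ih hA)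
  | plusR F ih => exact fun hA => Focus.plusR (ih hA)

lemma focus_sound : ∀ {P : MALLForm} {Γ : Multiset MALLForm}, Focus P Γ → Provable (P ::ₘ Γ) := by
  intro P Γ h
  induction h with
  | release _ p => exact p
  | atom n => exact Provable.ax n
  | tens _ _ ih1 ih2 => exact Provable.tens ih1 ih2
  | plusL _ ih => exact Provable.plusL ih
  | plusR _ ih => exact Provable.plusR ih

lemma notNeg_pos {A : MALLForm} (h : ¬ A.isNeg = true) : A.isPos = true := by
  simp [MALLForm.isPos]; simpa using h

/-- focalization. Every provable MALL sequent consisting only of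
positive formulas has a proof that begins (from the root) with a complete
decomposition of the synthetic connective of at least one of its formulas. -/
theorem focalization (Γ : Multiset MALLForm) (h : Provable Γ)
    (hpos : ∀ A ∈ Γ, A.isPos = true) :
    ∃ P ∈ Γ, Focus P (Γ.erase P) := by
  have key : ∀ {Γ : Multiset MALLForm}, Provable Γ → (∀ A ∈ Γ, A.isPos = true) →
      ∃ P ∈ Γ, Focus P (Γ.erase P) := by
    intro Γ h
    induction h with
    | ax n =>
      intro hp
      have := hp (.natom n) (by simp)
      simp [MALLForm.isPos, MALLForm.isNeg] at this
    | parr p ih =>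
      intro hp
      have := hp (.parr _ _) (Multiset.mem_cons_self _ _)
      simp [MALLForm.isPos, MALLForm.isNeg] at this
    | withh p q ih1 ih2 =>
      intro hp
      have := hp (.withh _ _) (Multiset.mem_cons_self _ _)
      simp [MALLForm.isPos, MALLForm.isNeg] at this
    | @plusL A B Γ hA ih =>
      intro hp
      have hΓ : ∀ X ∈ Γ, X.isPos = true := fun X hX => hp X (Multiset.mem_cons_of_mem hX)
      by_cases hAn : A.isNeg = true
      · exact ⟨.plus A B, Multiset.mem_cons_self _ _, by
          rw [Multiset.erase_cons_head]
          exact Focus.plusL (Focus.release hAn hA)⟩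
      · have hApos := notNeg_pos hAn
        have hpA : ∀ X ∈ A ::ₘ Γ, X.isPos = true := by
          intro X hX
          rcases Multiset.mem_cons.mp hX with rfl | hX'
          · exact hApos
          · exact hΓ _ hX'
        obtain ⟨Q, hQ, hFQ⟩ := ih hpA
        by_cases hQA : Q = A
        · subst hQA
          rw [Multiset.erase_cons_head] at hFQ
          exact ⟨.plus Q B, Multiset.mem_cons_self _ _, by
            rw [Multiset.erase_cons_head]; exact Focus.plusL hFQ⟩
        · have hQΓ : Q ∈ Γ := (Multiset.mem_cons.mp hQ).resolve_left hQA
          rw [Multiset.erase_cons_tail _ (fun h => hQA h.symm)] at hFQ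
          have := focus_ctx (.plus A B) A 0 hApos
            (fun Θ p => by rw [add_zero]; exact Provable.plusL p) hFQ
            (Multiset.mem_cons_self _ _)
          rw [Multiset.erase_cons_head, add_zero] at this
          exact ⟨Q, Multiset.mem_cons_of_mem hQΓ, by
            rw [erase_cons_of_mem hQΓ]; exact this⟩
    | @plusR A B Γ hB ih =>
      intro hp
      have hΓ : ∀ X ∈ Γ, X.isPos = true := fun X hX => hp X (Multiset.mem_cons_of_mem hX)
      by_cases hBn : B.isNeg = true
      · exact ⟨.plus A B, Multiset.mem_cons_self _ _, by
          rw [Multiset.erase_cons_head]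
          exact Focus.plusR (Focus.release hBn hB)⟩
      · have hBpos := notNeg_pos hBn
        have hpB : ∀ X ∈ B ::ₘ Γ, X.isPos = true := by
          intro X hX
          rcases Multiset.mem_cons.mp hX with rfl | hX'
          · exact hBpos
          · exact hΓ _ hX'
        obtain ⟨Q, hQ, hFQ⟩ := ih hpB
        by_cases hQB : Q = B
        · subst hQB
          rw [Multiset.erase_cons_head] at hFQ
          exact ⟨.plus A Q, Multiset.mem_cons_self _ _, by
            rw [Multiset.erase_cons_head]; exact Focus.plusR hFQ⟩
        · have hQΓ : Q ∈ Γ := (Multiset.mem_cons.mp hQ).resolve_left hQB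
          rw [Multiset.erase_cons_tail _ (fun h => hQB h.symm)] at hFQ
          have := focus_ctx (.plus A B) B 0 hBpos
            (fun Θ p => by rw [add_zero]; exact Provable.plusR p) hFQ
            (Multiset.mem_cons_self _ _)
          rw [Multiset.erase_cons_head, add_zero] at this
          exact ⟨Q, Multiset.mem_cons_of_mem hQΓ, by
            rw [erase_cons_of_mem hQΓ]; exact this⟩
    | @tens A B Γ Δ hA hB ihA ihB =>
      intro hp
      have hΓ : ∀ X ∈ Γ, X.isPos = true := fun X hX =>
        hp X (Multiset.mem_cons_of_mem (Multiset.mem_add.mpr (Or.inl hX)))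
      have hΔ : ∀ X ∈ Δ, X.isPos = true := fun X hX =>
        hp X (Multiset.mem_cons_of_mem (Multiset.mem_add.mpr (Or.inr hX)))
      -- once we have a focused proof of A on context Γ, finish by dealing with B
      have continueB : Focus A Γ → ∃ P ∈ (MALLForm.tens A B ::ₘ (Γ + Δ)),
          Focus P ((MALLForm.tens A B ::ₘ (Γ + Δ)).erase P) := by
        intro hFA
        by_cases hBn : B.isNeg = true
        · exact ⟨.tens A B, Multiset.mem_cons_self _ _, by
            rw [Multiset.erase_cons_head]
            exact Focus.tens hFA (Focus.release hBn hB)⟩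
        · have hBpos := notNeg_pos hBn
          have hpB : ∀ X ∈ B ::ₘ Δ, X.isPos = true := by
            intro X hX
            rcases Multiset.mem_cons.mp hX with rfl | hX'
            · exact hBpos
            · exact hΔ _ hX'
          obtain ⟨R, hR, hFR⟩ := ihB hpB
          by_cases hRB : R = B
          · subst hRB
            rw [Multiset.erase_cons_head] at hFR
            exact ⟨.tens A R, Multiset.mem_cons_self _ _, by
              rw [Multiset.erase_cons_head]; exact Focus.tens hFA hFR⟩
          · have hRΔ : R ∈ Δ := (Multiset.mem_cons.mp hR).resolve_left hRB
            rw [Multiset.erase_cons_tail _ (fun h => hRB h.symm)] at hFR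
            have := focus_ctx (.tens A B) B Γ hBpos
              (fun Θ p => by rw [add_comm]; exact Provable.tens hA p) hFR
              (Multiset.mem_cons_self _ _)
            rw [Multiset.erase_cons_head] at this
            refine ⟨R, Multiset.mem_cons_of_mem (Multiset.mem_add.mpr (Or.inr hRΔ)), ?_⟩
            rw [erase_cons_of_mem (Multiset.mem_add.mpr (Or.inr hRΔ)),
              Multiset.erase_add_right_pos _ hRΔ, add_comm Γ]
            exact this
      by_cases hAn : A.isNeg = true
      · exact continueB (Focus.release hAn hA)
      · have hApos := notNeg_pos hAn
        have hpA : ∀ X ∈ A ::ₘ Γ, X.isPos = true := by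
          intro X hX
          rcases Multiset.mem_cons.mp hX with rfl | hX'
          · exact hApos
          · exact hΓ _ hX'
        obtain ⟨Q, hQ, hFQ⟩ := ihA hpA
        by_cases hQA : Q = A
        · subst hQA
          rw [Multiset.erase_cons_head] at hFQ
          exact continueB hFQ
        · have hQΓ : Q ∈ Γ := (Multiset.mem_cons.mp hQ).resolve_left hQA
          rw [Multiset.erase_cons_tail _ (fun h => hQA h.symm)] at hFQ
          have := focus_ctx (.tens A B) A Δ hApos
            (fun Θ p => Provable.tens p hB) hFQ (Multiset.mem_cons_self _ _)
          rw [Multiset.erase_cons_head] at this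
          refine ⟨Q, Multiset.mem_cons_of_mem (Multiset.mem_add.mpr (Or.inl hQΓ)), ?_⟩
          rw [erase_cons_of_mem (Multiset.mem_add.mpr (Or.inl hQΓ)),
            Multiset.erase_add_left_pos _ hQΓ]
          exact this
  exact key h hpos
end
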